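/- Let E be a directed graph and K a field. Let D be a set containing exactly one irrational infinite path from each tail-equivalence class of irrational paths, together with all singular vertices of E. Then the ℤ-graded L_K(E)-modules V_{[x]}(n), for x ∈ D and n ∈ ℤ, are graded simple and pairwise non-graded-isomorphic; moreover, for every y ∈ ∂E which is not rational and every m ∈ ℤ, there exist x ∈ D and k ∈ ℤ with y ∼_k x, and then V_{[y]}(m) is graded isomorphic to V_{[x]}(m + k). -/

import Mathlib

open scoped Classical

/-- A directed graph: vertices, edges, source and range maps. -/
structure DirGraph : Type 1 where
  V : Type
  E : Type
  s : E → V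
  r : E → V

namespace DirGraph

variable (G : DirGraph)

/-- A finite path: a source vertex together with a compatible list of edges
(the empty list gives the path of length 0 at `src`). -/
structure FinPath where
  src : G.V
  edges : List G.E
  src_eq : ∀ e ∈ edges.head?, G.s e = src
  chain : edges.Chain' (fun e f => G.r e = G.s f)

variable {G}

/-- The range of a finite path. -/
def FinPath.rng (μ : G.FinPath) : G.V :=
  ((μ.edges.getLast?).map G.r).getD μ.src

/-- The length of a finite path. -/
def FinPath.length (μ : G.FinPath) : ℕ := μ.edges.length

variable (G)

/-- An infinite path. -/
structure InfPath where
  edges : ℕ → G.E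
  chain : ∀ n, G.r (edges n) = G.s (edges (n + 1))

/-- The source of an infinite path. -/
def InfPath.src {G : DirGraph} (p : G.InfPath) : G.V := G.s (p.edges 0)

def IsSink (v : G.V) : Prop := ∀ e, G.s e ≠ v

def IsInfEmitter (v : G.V) : Prop := {e | G.s e = v}.Infinite

def IsSingular (v : G.V) : Prop := IsSink G v ∨ IsInfEmitter G v

/-- Boundary paths: infinite paths, together with finite paths ending in a singular vertex. -/
def BPath : Type := {x : G.FinPath ⊕ G.InfPath // ∀ μ, x = Sum.inl μ → IsSingular G μ.rng}

variable {G}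

/-- The source of a boundary path. -/
def BPath.src (x : G.BPath) : G.V :=
  match x.1 with
  | Sum.inl μ => μ.src
  | Sum.inr p => p.src

def BPath.IsInfinite (x : G.BPath) : Prop := ∃ p, x.1 = Sum.inr p

/-- `IsCat μ p x` means `x = μ p`, i.e. `x` is the concatenation of the finite path `μ`
with the boundary path `p` (in particular `r(μ) = s(p)`). -/
def IsCat (μ : G.FinPath) (p x : G.BPath) : Prop :=
  μ.rng = p.src ∧
  match p.1, x.1 with
  | Sum.inl q, Sum.inl ξ => ξ.src = μ.src ∧ ξ.edges = μ.edges ++ q.edges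
  | Sum.inr q, Sum.inr ξ =>
      (∀ (i : ℕ) (h : i < μ.edges.length), ξ.edges i = μ.edges.get ⟨i, h⟩) ∧
      (∀ i : ℕ, ξ.edges (μ.edges.length + i) = q.edges i)
  | _, _ => False

/-- `x ∼_k y` : tail equivalence with lag `k`. -/
def TailEqLag (x y : G.BPath) (k : ℤ) : Prop :=
  ∃ (μ ν : G.FinPath) (p : G.BPath),
    IsCat μ p x ∧ IsCat ν p y ∧ (μ.length : ℤ) - (ν.length : ℤ) = k

/-- Tail equivalence. -/
def TailEq (x y : G.BPath) : Prop := ∃ k, TailEqLag x y k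

/-- The tail-equivalence class (orbit) of a boundary path. -/
def orbit (x : G.BPath) : Set G.BPath := {y | TailEq y x}

/-- A closed path: positive length, same source and range. -/
def FinPath.IsClosed (c : G.FinPath) : Prop := 0 < c.length ∧ c.rng = c.src

/-- A boundary path is rational if it is tail equivalent to `c^∞` for some closed path `c`;
here `c^∞` is characterized as the unique boundary path `p` with `p = c p`. -/
def IsRational (x : G.BPath) : Prop :=
  ∃ (c : G.FinPath) (p : G.BPath), 0 < c.length ∧ IsCat c p p ∧ TailEq x p

/-- A simple closed path: a closed path which is not a proper power of a closed path. -/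
def FinPath.IsSimpleClosed (c : G.FinPath) : Prop :=
  c.IsClosed ∧
    ¬ ∃ (d : G.FinPath) (n : ℕ), 2 ≤ n ∧ d.IsClosed ∧ c.src = d.src ∧
        c.edges = (List.replicate n d.edges).flatten

/-- A cycle: a closed path passing through no vertex twice. -/
def FinPath.IsCycle (c : G.FinPath) : Prop := c.IsClosed ∧ (c.edges.map G.s).Nodup

/-- An exit for a finite path. -/
def FinPath.HasExit (c : G.FinPath) : Prop :=
  ∃ (i : ℕ) (h : i < c.edges.length) (e : G.E),
    G.s e = G.s (c.edges.get ⟨i, h⟩) ∧ e ≠ c.edges.get ⟨i, h⟩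

/-- `c` is a rotation of `d`. -/
def FinPath.IsRotationOf (c d : G.FinPath) : Prop := ∃ i, c.edges = d.edges.rotate i

/-- A maximal cycle: a cycle such that any cycle from which there is a finite path to its
source is a rotation of it. -/
def FinPath.IsMaxCycle (c : G.FinPath) : Prop :=
  c.IsCycle ∧ ∀ d : G.FinPath, d.IsCycle →
    (∃ μ : G.FinPath, μ.src = d.src ∧ μ.rng = c.src) → d.IsRotationOf c

/-- A maximal sink: a sink with no finite path from the source of any cycle to it. -/
def IsMaxSink (G : DirGraph) (v : G.V) : Prop :=
  IsSink G v ∧ ¬ ∃ (d μ : G.FinPath), d.IsCycle ∧ μ.src = d.src ∧ μ.rng = v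

/-- A graph is row-finite if every vertex emits finitely many edges. -/
def RowFinite (G : DirGraph) : Prop := ∀ v : G.V, {e | G.s e = v}.Finite

/-- The set of predecessors of a vertex. -/
def preds (G : DirGraph) (v : G.V) : Set G.V := {w | ∃ μ : G.FinPath, μ.src = w ∧ μ.rng = v}

/-- The finite path of length 0 at a vertex. -/
def vertexPath (G : DirGraph) (v : G.V) : G.FinPath :=
  ⟨v, [], by intro e he; simp at he, List.isChain_nil⟩

/-- A singular vertex, seen as a boundary path. -/
def vertexBPath (G : DirGraph) (v : G.V) (h : IsSingular G v) : G.BPath :=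
  ⟨Sum.inl (vertexPath G v), by
    intro μ hμ
    injection hμ with h2
    subst h2
    exact h⟩

/-- The finite path consisting of a single edge. -/
def singleE (G : DirGraph) (e : G.E) : G.FinPath :=
  ⟨G.s e, [e], by
    intro f hf
    simp only [List.head?_cons, Option.mem_def, Option.some.injEq] at hf
    subst hf
    rfl, List.isChain_singleton e⟩

/-- `a_μ`: the product of the values of `a` along a finite path. -/
def aval {G : DirGraph} {K : Type} [Field K] (a : G.E → K) (μ : G.FinPath) : K :=
  (μ.edges.map a).prod

/-! ## The Leavitt path algebra -/

/-- Generators of the Leavitt path algebra: vertices, edges and ghost edges. -/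
inductive Gen (G : DirGraph) : Type
  | vtx : G.V → Gen G
  | edg : G.E → Gen G
  | ghd : G.E → Gen G

/-- The defining relations of the Leavitt path algebra. -/
inductive LRel (G : DirGraph) (K : Type) [Field K] :
    FreeAlgebra K (Gen G) → FreeAlgebra K (Gen G) → Prop
  | vv_eq (v : G.V) :
      LRel G K (FreeAlgebra.ι K (Gen.vtx v) * FreeAlgebra.ι K (Gen.vtx v))
        (FreeAlgebra.ι K (Gen.vtx v))
  | vv_ne {v w : G.V} (h : v ≠ w) :
      LRel G K (FreeAlgebra.ι K (Gen.vtx v) * FreeAlgebra.ι K (Gen.vtx w)) 0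
  | e1l (e : G.E) :
      LRel G K (FreeAlgebra.ι K (Gen.vtx (G.s e)) * FreeAlgebra.ι K (Gen.edg e))
        (FreeAlgebra.ι K (Gen.edg e))
  | e1r (e : G.E) :
      LRel G K (FreeAlgebra.ι K (Gen.edg e) * FreeAlgebra.ι K (Gen.vtx (G.r e)))
        (FreeAlgebra.ι K (Gen.edg e))
  | e2l (e : G.E) :
      LRel G K (FreeAlgebra.ι K (Gen.vtx (G.r e)) * FreeAlgebra.ι K (Gen.ghd e))
        (FreeAlgebra.ι K (Gen.ghd e))
  | e2r (e : G.E) :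
      LRel G K (FreeAlgebra.ι K (Gen.ghd e) * FreeAlgebra.ι K (Gen.vtx (G.s e)))
        (FreeAlgebra.ι K (Gen.ghd e))
  | ck1_eq (e : G.E) :
      LRel G K (FreeAlgebra.ι K (Gen.ghd e) * FreeAlgebra.ι K (Gen.edg e))
        (FreeAlgebra.ι K (Gen.vtx (G.r e)))
  | ck1_ne {e f : G.E} (h : e ≠ f) :
      LRel G K (FreeAlgebra.ι K (Gen.ghd e) * FreeAlgebra.ι K (Gen.edg f)) 0
  | ck2 (v : G.V) (hfin : {e | G.s e = v}.Finite) (hne : ∃ e, G.s e = v) :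
      LRel G K (FreeAlgebra.ι K (Gen.vtx v))
        (∑ e ∈ hfin.toFinset, FreeAlgebra.ι K (Gen.edg e) * FreeAlgebra.ι K (Gen.ghd e))

/-- The Leavitt path algebra of `G` over `K`. -/
abbrev LPA (G : DirGraph) (K : Type) [Field K] : Type := RingQuot (LRel G K)

/-- The image of a vertex in the Leavitt path algebra. -/
def ofV (G : DirGraph) (K : Type) [Field K] (v : G.V) : LPA G K :=
  RingQuot.mkAlgHom K (LRel G K) (FreeAlgebra.ι K (Gen.vtx v))

/-- The image of an edge in the Leavitt path algebra. -/
def ofE (G : DirGraph) (K : Type) [Field K] (e : G.E) : LPA G K :=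
  RingQuot.mkAlgHom K (LRel G K) (FreeAlgebra.ι K (Gen.edg e))

/-- The image of a ghost edge in the Leavitt path algebra. -/
def ofG (G : DirGraph) (K : Type) [Field K] (e : G.E) : LPA G K :=
  RingQuot.mkAlgHom K (LRel G K) (FreeAlgebra.ι K (Gen.ghd e))

/-- The element `μ` of the Leavitt path algebra associated to a finite path `μ`. -/
def pathElem (G : DirGraph) (K : Type) [Field K] (μ : G.FinPath) : LPA G K :=
  ofV G K μ.src * (μ.edges.map (ofE G K)).prod

/-- The element `μ^*` of the Leavitt path algebra associated to a finite path `μ`. -/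
def pathStarElem (G : DirGraph) (K : Type) [Field K] (μ : G.FinPath) : LPA G K :=
  (μ.edges.reverse.map (ofG G K)).prod * ofV G K μ.src

/-- The degree-`n` homogeneous component of the canonical `ℤ`-grading of the Leavitt
path algebra: the span of the monomials `μ ν^*` with `|μ| - |ν| = n`. -/
def LPAdeg (G : DirGraph) (K : Type) [Field K] (n : ℤ) : Submodule K (LPA G K) :=
  Submodule.span K {x | ∃ μ ν : G.FinPath, μ.rng = ν.rng ∧
    (μ.length : ℤ) - (ν.length : ℤ) = n ∧ x = pathElem G K μ * pathStarElem G K ν}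

/-- `W` is a `ℤ`-grading making `M` a graded module over the canonically graded
Leavitt path algebra. -/
def IsModuleGrading (G : DirGraph) (K : Type) [Field K] (M : Type) [AddCommGroup M]
    [Module K M] [Module (LPA G K) M] (W : ℤ → Submodule K M) : Prop :=
  DirectSum.IsInternal W ∧
    ∀ (m k : ℤ) (a : LPA G K) (y : M), a ∈ LPAdeg G K m → y ∈ W k → a • y ∈ W (m + k)

/-- A set is graded (with respect to a grading `W`) if each of its elements is a finite sum
of homogeneous elements of the set. -/
def GradedCarrier {K M : Type} [Field K] [AddCommGroup M] [Module K M]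
    (W : ℤ → Submodule K M) (S : Set M) : Prop :=
  ∀ m ∈ S, ∃ l : List M, (∀ z ∈ l, z ∈ S ∧ ∃ k, z ∈ W k) ∧ l.sum = m

/-- A graded isomorphism between graded modules over the Leavitt path algebra. -/
def GradedIsoLPA (G : DirGraph) (K : Type) [Field K] (M N : Type)
    [AddCommGroup M] [AddCommGroup N] [Module K M] [Module K N]
    [Module (LPA G K) M] [Module (LPA G K) N]
    (W : ℤ → Submodule K M) (W' : ℤ → Submodule K N) : Prop :=
  ∃ f : M ≃ₗ[LPA G K] N, (∀ k, ∀ m ∈ W k, f m ∈ W' k) ∧ ∀ k, ∀ n ∈ W' k, f.symm n ∈ W k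

/-- A module over the Leavitt path algebra is unital if it is generated by the images of the
vertices. -/
def IsUnitalModule (G : DirGraph) (K : Type) [Field K] (M : Type) [AddCommGroup M]
    [Module (LPA G K) M] : Prop :=
  ∀ m : M, m ∈ Submodule.span (LPA G K) {y : M | ∃ (v : G.V) (m' : M), y = ofV G K v • m'}

/-! ## Chen modules, specified by a basis and the action of the generators -/

/-- A specification of the (twisted) Chen module attached to a boundary path `x`:
an `L_K(E)`-module `M` which is a `K'`-vector space with basis the tail-equivalence class
of `x`, the generators acting by the τ-twisted shift formulas. Here `K ⊆ K'` is a field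
extension and `τ : E¹ → K'` is a family of nonzero scalars. -/
structure ChenSpecT (G : DirGraph) (K K' : Type) [Field K] [Field K'] [Algebra K K']
    (τ : G.E → K') (x : G.BPath) (M : Type) [AddCommGroup M] [Module K' M]
    [Module (LPA G K) M] : Type where
  tau_ne : ∀ e, τ e ≠ 0
  basis : Module.Basis (orbit x) K' M
  act_v : ∀ (v : G.V) (p : orbit x),
    ofV G K v • basis p = if v = BPath.src (p : G.BPath) then basis p else 0
  act_e : ∀ (e : G.E) (p q : orbit x), IsCat (singleE G e) (p : G.BPath) (q : G.BPath) →
    ofE G K e • basis p = τ e • basis q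
  act_e_zero : ∀ (e : G.E) (p : orbit x),
    (¬ ∃ q : G.BPath, IsCat (singleE G e) (p : G.BPath) q) → ofE G K e • basis p = 0
  act_g : ∀ (e : G.E) (p q : orbit x), IsCat (singleE G e) (p : G.BPath) (q : G.BPath) →
    ofG G K e • basis q = (τ e)⁻¹ • basis p
  act_g_zero : ∀ (e : G.E) (q : orbit x),
    (¬ ∃ p : G.BPath, IsCat (singleE G e) p (q : G.BPath)) → ofG G K e • basis q = 0

/-- Specification of the Chen module `V_{[x]}^a` twisted by `a : E¹ → K^*`
(`a = 1` gives `V_{[x]}`). -/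
abbrev ChenSpec (G : DirGraph) (K : Type) [Field K] (a : G.E → K) (x : G.BPath) (M : Type)
    [AddCommGroup M] [Module K M] [Module (LPA G K) M] : Type :=
  ChenSpecT G K K a x M

/-- The canonical grading on a Chen module: the degree-`k` component is spanned by the basis
elements tail-equivalent to `x` with lag `k`. -/
def chenW {G : DirGraph} {K' : Type} [Field K'] {x : G.BPath} {M : Type}
    [AddCommGroup M] [Module K' M] (b : Module.Basis (orbit x) K' M) (k : ℤ) : Submodule K' M :=
  Submodule.span K' (⇑b '' {p : orbit x | TailEqLag (p : G.BPath) x k})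

/-! ## The module `K L_x` -/

/-- The set `L_x` of pairs `(y, k)` with `y ∼_k x`. -/
def Lset (G : DirGraph) (x : G.BPath) : Set (G.BPath × ℤ) := {yk | TailEqLag yk.1 x yk.2}

/-- The underlying `K`-vector space of the module `K L_x`, with basis `L_x`. -/
abbrev KLCarrier (G : DirGraph) (K : Type) [Field K] (x : G.BPath) : Type := (Lset G x) →₀ K

/-- Specification of the `L_K(E)`-module structure on `K L_x`, given by
`(μ ν^*) ⬝ (y, k) = (μ p, |μ| - |ν| + k)` when `y = ν p`, and `0` otherwise. The module
structure is encoded as a `K`-algebra homomorphism `ρ` to the endomorphism algebra. -/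
def KLSpec (G : DirGraph) (K : Type) [Field K] (x : G.BPath)
    (ρ : LPA G K →ₐ[K] Module.End K (KLCarrier G K x)) : Prop :=
  (∀ (μ ν : G.FinPath), μ.rng = ν.rng → ∀ (yk zk : Lset G x) (p : G.BPath),
      IsCat ν p (yk : G.BPath × ℤ).1 → IsCat μ p (zk : G.BPath × ℤ).1 →
      (zk : G.BPath × ℤ).2 = (yk : G.BPath × ℤ).2 + (μ.length : ℤ) - (ν.length : ℤ) →
      ρ (pathElem G K μ * pathStarElem G K ν) (Finsupp.single yk 1) = Finsupp.single zk 1) ∧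
  (∀ (μ ν : G.FinPath), μ.rng = ν.rng → ∀ yk : Lset G x,
      (¬ ∃ p : G.BPath, IsCat ν p (yk : G.BPath × ℤ).1) →
      ρ (pathElem G K μ * pathStarElem G K ν) (Finsupp.single yk 1) = 0)

/-- The canonical grading of `K L_x`: `(y, k)` is homogeneous of degree `k`. -/
noncomputable def KLgr (G : DirGraph) (K : Type) [Field K] (x : G.BPath) (k : ℤ) :
    Submodule K (KLCarrier G K x) :=
  Submodule.span K {m | ∃ yk : Lset G x, (yk : G.BPath × ℤ).2 = k ∧ m = Finsupp.single yk 1}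

end DirGraph

-- ===== AUX START =====
namespace DirGraph

variable {G : DirGraph}

theorem FinPath.ext' {μ ν : G.FinPath} (h1 : μ.src = ν.src) (h2 : μ.edges = ν.edges) :
    μ = ν := by
  cases μ; cases ν; simp_all

theorem InfPath.ext' {p q : G.InfPath} (h : p.edges = q.edges) : p = q := by
  cases p; cases q; simp_all

theorem BPath.ext' {p q : G.BPath} (h : p.1 = q.1) : p = q := Subtype.ext h

theorem FinPath.rng_eq_of_getLast? {μ : G.FinPath} {e : G.E}
    (h : μ.edges.getLast? = some e) : μ.rng = G.r e := by
  simp [FinPath.rng, h]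

theorem FinPath.rng_of_nil {μ : G.FinPath} (h : μ.edges = []) : μ.rng = μ.src := by
  simp [FinPath.rng, h]

@[simp] theorem vertexPath_rng (v : G.V) : (vertexPath G v).rng = v := rfl
@[simp] theorem vertexPath_src (v : G.V) : (vertexPath G v).src = v := rfl
@[simp] theorem vertexPath_edges (v : G.V) : (vertexPath G v).edges = [] := rfl
@[simp] theorem singleE_edges (e : G.E) : (singleE G e).edges = [e] := rfl
@[simp] theorem singleE_src (e : G.E) : (singleE G e).src = G.s e := rfl
@[simp] theorem singleE_rng (e : G.E) : (singleE G e).rng = G.r e := by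
  simp [FinPath.rng, singleE]

theorem isCat_nil {x : G.BPath} {μ : G.FinPath} (h1 : μ.edges = []) (h2 : μ.src = x.src) :
    IsCat μ x x := by
  obtain ⟨x1 | x1, hx⟩ := x
  · exact ⟨by rw [FinPath.rng_of_nil h1]; exact h2, h2.symm, by rw [h1]; rfl⟩
  · refine ⟨by rw [FinPath.rng_of_nil h1]; exact h2, ?_, ?_⟩
    · intro i h
      rw [h1] at h
      exact absurd h (Nat.not_lt_zero i)
    · intro i
      simp [h1]

theorem IsCat.src_eq' {μ : G.FinPath} {p x : G.BPath} (h : IsCat μ p x) : μ.src = x.src := by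
  obtain ⟨p1 | p1, hp⟩ := p <;> obtain ⟨x1 | x1, hx⟩ := x
  · exact h.2.1.symm
  · exact h.2.elim
  · exact h.2.elim
  · rcases h with ⟨hr, h1, h2⟩
    cases hl : μ.edges with
    | nil =>
      have h0 := h2 0
      rw [hl] at h0
      simp only [List.length_nil, Nat.zero_add] at h0
      rw [← FinPath.rng_of_nil hl, hr]
      show G.s (p1.edges 0) = G.s (x1.edges 0)
      rw [h0]
    | cons e t =>
      have h0 : x1.edges 0 = e := by
        have := h1 0 (by rw [hl]; simp)
        simpa [hl] using this
      have hse := μ.src_eq e (by rw [hl]; rfl)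
      show μ.src = G.s (x1.edges 0)
      rw [h0, hse]

theorem isCat_det {μ : G.FinPath} {p x y : G.BPath} (hx : IsCat μ p x) (hy : IsCat μ p y) :
    x = y := by
  obtain ⟨p1 | p1, hp⟩ := p
  · obtain ⟨x1 | x1, hxs⟩ := x
    · obtain ⟨y1 | y1, hys⟩ := y
      · apply BPath.ext'
        simp only
        congr 1
        exact FinPath.ext' (hx.2.1.trans hy.2.1.symm) (hx.2.2.trans hy.2.2.symm)
      · exact hy.2.elim
    · exact hx.2.elim
  · obtain ⟨x1 | x1, hxs⟩ := x
    · exact hx.2.elim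
    · obtain ⟨y1 | y1, hys⟩ := y
      · exact hy.2.elim
      · apply BPath.ext'
        simp only
        congr 1
        apply InfPath.ext'
        funext i
        rcases Nat.lt_or_ge i μ.edges.length with h | h
        · rw [hx.2.1 i h, hy.2.1 i h]
        · obtain ⟨j, rfl⟩ := Nat.exists_eq_add_of_le h
          rw [hx.2.2 j, hy.2.2 j]

def FinPath.comp (μ ν : G.FinPath) (h : μ.rng = ν.src) : G.FinPath where
  src := μ.src
  edges := μ.edges ++ ν.edges
  src_eq := by
    intro e he
    cases hl : μ.edges with
    | nil =>
      rw [hl] at he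
      simp only [List.nil_append] at he
      rw [ν.src_eq e he, ← h, FinPath.rng_of_nil hl]
    | cons f t =>
      have hef : e = f := by
        rw [hl] at he
        simp only [List.cons_append, List.head?_cons, Option.mem_def,
          Option.some.injEq] at he
        exact he.symm
      rw [hef]
      exact μ.src_eq f (by rw [hl]; rfl)
  chain := by
    apply List.isChain_append.mpr
    refine ⟨μ.chain, ν.chain, ?_⟩
    intro a ha b hb
    rw [show G.r a = μ.rng from (FinPath.rng_eq_of_getLast? ha).symm, h]
    exact (ν.src_eq b hb).symm

@[simp] theorem FinPath.comp_edges (μ ν : G.FinPath) (h : μ.rng = ν.src) :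
    (μ.comp ν h).edges = μ.edges ++ ν.edges := rfl

@[simp] theorem FinPath.comp_src (μ ν : G.FinPath) (h : μ.rng = ν.src) :
    (μ.comp ν h).src = μ.src := rfl

theorem FinPath.comp_rng (μ ν : G.FinPath) (h : μ.rng = ν.src) :
    (μ.comp ν h).rng = ν.rng := by
  cases hl : ν.edges.getLast? with
  | none =>
    have h0 : ν.edges = [] := by
      cases he : ν.edges with
      | nil => rfl
      | cons a t => rw [he] at hl; simp [List.getLast?] at hl
    have h2 : (μ.comp ν h).rng = μ.rng := by simp [FinPath.rng, h0]
    rw [h2, FinPath.rng_of_nil h0]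
    exact h
  | some a =>
    rw [FinPath.rng_eq_of_getLast? hl,
        FinPath.rng_eq_of_getLast? (List.mem_getLast?_append_of_mem_getLast? hl)]

theorem isCat_comp {μ ν : G.FinPath} {p q x : G.BPath} (hμ : IsCat μ p x) (hν : IsCat ν q p)
    (h : μ.rng = ν.src) : IsCat (μ.comp ν h) q x := by
  obtain ⟨q1 | q1, hq⟩ := q
  · obtain ⟨p1 | p1, hp⟩ := p
    · obtain ⟨x1 | x1, hx⟩ := x
      · refine ⟨by rw [FinPath.comp_rng]; exact hν.1, hμ.2.1, ?_⟩
        rw [hμ.2.2, hν.2.2, ← List.append_assoc]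
        rfl
      · exact hμ.2.elim
    · exact hν.2.elim
  · obtain ⟨p1 | p1, hp⟩ := p
    · exact hν.2.elim
    · obtain ⟨x1 | x1, hx⟩ := x
      · exact hμ.2.elim
      · obtain ⟨hr1, hA, hB⟩ := hμ
        obtain ⟨hr2, hC, hD⟩ := hν
        refine ⟨by rw [FinPath.comp_rng]; exact hr2, ?_, ?_⟩
        · intro i hi
          have hi' : i < (μ.edges ++ ν.edges).length := hi
          show x1.edges i = (μ.edges ++ ν.edges)[i]'hi'
          rcases Nat.lt_or_ge i μ.edges.length with hlt | hge
          · rw [List.getElem_append_left hlt]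
            exact (hA i hlt).trans List.get_eq_getElem
          · obtain ⟨j, rfl⟩ := Nat.exists_eq_add_of_le hge
            have hj : j < ν.edges.length := by
              rw [List.length_append] at hi'
              omega
            rw [List.getElem_append_right hge]
            simp only [Nat.add_sub_cancel_left]
            exact (hB j).trans ((hC j hj).trans List.get_eq_getElem)
        · intro i
          show x1.edges ((μ.edges ++ ν.edges).length + i) = q1.edges i
          rw [List.length_append, Nat.add_assoc, hB, hD]

theorem chain'_of_isChain {α : Type*} {R : α → α → Prop} {l : List α} (h : l.IsChain R) :
    l.Chain' R := h

theorem isChain_of_chain' {α : Type*} {R : α → α → Prop} {l : List α} (h : l.Chain' R) :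
    l.IsChain R := h

theorem getLast?_none' {α : Type*} {l : List α} (h : l.getLast? = none) : l = [] := by
  cases l with
  | nil => rfl
  | cons a t => rw [List.getLast?_eq_getLast (by simp)] at h; simp at h

theorem head?_get' {α : Type*} {l : List α} {f : α} (h : l.head? = some f) :
    ∃ h0 : 0 < l.length, l.get ⟨0, h0⟩ = f := by
  cases l with
  | nil => simp at h
  | cons a t =>
    simp only [List.head?_cons, Option.some.injEq] at h
    exact ⟨by simp, by simp [h]⟩

def firstEdge (p : G.BPath) : Option G.E :=
  match p.1 with
  | Sum.inl μ => μ.edges.head?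
  | Sum.inr ρ => some (ρ.edges 0)

theorem firstEdge_src {p : G.BPath} {e : G.E} (h : firstEdge p = some e) :
    G.s e = p.src := by
  obtain ⟨p1 | p1, hp⟩ := p
  · exact p1.src_eq e h
  · have h' : some (p1.edges 0) = some e := h
    show G.s e = G.s (p1.edges 0)
    rw [Option.some.inj h']

theorem exists_peel {p : G.BPath} {e : G.E} (h : firstEdge p = some e) :
    ∃ d, IsCat (singleE G e) d p := by
  obtain ⟨p1 | p1, hp⟩ := p
  · have h' : p1.edges.head? = some e := h
    cases hl : p1.edges with
    | nil => rw [hl] at h'; simp at h'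
    | cons f t =>
      have hl' : p1.edges = e :: t := by
        rw [hl] at h' ⊢
        simp only [List.head?_cons, Option.some.injEq] at h'
        rw [h']
      obtain ⟨hsrc, hch⟩ := List.isChain_cons.mp (hl' ▸ p1.chain)
      refine ⟨⟨Sum.inl ⟨G.r e, t, fun f hf => (hsrc f hf).symm, chain'_of_isChain hch⟩, ?_⟩, ?_, ?_, ?_⟩
      · intro μ' hh
        injection hh with hh2
        subst hh2
        have hrng : FinPath.rng ⟨G.r e, t, fun f hf => (hsrc f hf).symm, chain'_of_isChain hch⟩ = p1.rng := by
          cases ht : t.getLast? with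
          | none =>
            have ht0 : t = [] := getLast?_none' ht
            rw [FinPath.rng_of_nil (show (⟨G.r e, t, _, _⟩ : G.FinPath).edges = [] from ht0),
              FinPath.rng_eq_of_getLast? (μ := p1) (e := e) (by rw [hl', ht0]; rfl)]
          | some b =>
            rw [FinPath.rng_eq_of_getLast?
                (show (⟨G.r e, t, _, _⟩ : G.FinPath).edges.getLast? = some b from ht),
              FinPath.rng_eq_of_getLast? (μ := p1) (e := b) ?_]
            rw [hl']
            show ([e] ++ t).getLast? = some b
            exact List.mem_getLast?_append_of_mem_getLast? ht
        rw [hrng]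
        exact hp p1 rfl
      · show (singleE G e).rng = _
        simp only [singleE_rng]
        rfl
      · exact (p1.src_eq e (by rw [hl']; rfl)).symm
      · rw [hl']; rfl
  · have h' : p1.edges 0 = e := Option.some.inj h
    refine ⟨⟨Sum.inr ⟨fun i => p1.edges (i + 1), fun n => p1.chain (n + 1)⟩,
      fun μ' hh => nomatch hh⟩, ?_, ?_, ?_⟩
    · show (singleE G e).rng = _
      simp only [singleE_rng]
      show G.r e = G.s (p1.edges (0 + 1))
      rw [← h']
      exact p1.chain 0
    · intro i hi
      have hi0 : i = 0 := by
        have : i < 1 := hi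
        omega
      subst hi0
      exact h'
    · intro i
      show p1.edges (1 + i) = p1.edges (i + 1)
      rw [Nat.add_comm]

theorem isCat_firstEdge {p d : G.BPath} {e : G.E} (h : IsCat (singleE G e) d p) :
    firstEdge p = some e := by
  obtain ⟨d1 | d1, hd⟩ := d <;> obtain ⟨p1 | p1, hp⟩ := p
  · show p1.edges.head? = some e
    rw [h.2.2]
    rfl
  · exact h.2.elim
  · exact h.2.elim
  · show some (p1.edges 0) = some e
    have := h.2.1 0 (by simp)
    rw [this]
    rfl

theorem isCat_split {ν κ : G.FinPath} {p q x : G.BPath} (hν : IsCat ν p x) (hκ : IsCat κ q x)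
    (hle : ν.edges.length ≤ κ.edges.length) :
    ∃ τ : G.FinPath, IsCat τ q p ∧ κ.edges = ν.edges ++ τ.edges := by
  obtain ⟨x1 | x1, hx⟩ := x
  · obtain ⟨p1 | p1, hp⟩ := p
    swap
    · exact hν.2.elim
    obtain ⟨q1 | q1, hq⟩ := q
    swap
    · exact hκ.2.elim
    have e1 : ν.edges ++ p1.edges = κ.edges ++ q1.edges := (hν.2.2).symm.trans hκ.2.2
    have htake : κ.edges.take ν.edges.length = ν.edges := by
      have h2 := congrArg (List.take ν.edges.length) e1
      rw [List.take_left, List.take_append,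
        Nat.sub_eq_zero_of_le hle, List.take_zero, List.append_nil] at h2
      exact h2.symm
    set l := κ.edges.drop ν.edges.length with hldef
    have hsplit : κ.edges = ν.edges ++ l := by
      conv_lhs => rw [← List.take_append_drop ν.edges.length κ.edges]
      rw [htake]
    have hp1 : p1.edges = l ++ q1.edges := by
      apply List.append_cancel_left (as := ν.edges)
      rw [e1, hsplit, List.append_assoc]
    have hch : (l ++ q1.edges).Chain' (fun e f => G.r e = G.s f) := hp1 ▸ p1.chain
    refine ⟨⟨p1.src, l, ?_, chain'_of_isChain (List.isChain_append.mp (isChain_of_chain' hch)).1⟩, ⟨?_, rfl, hp1⟩, hsplit⟩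
    · intro f hf
      apply p1.src_eq f
      rw [hp1]
      exact List.mem_head?_append_of_mem_head? hf
    · -- rng ⟨p1.src, l⟩ = q1.src
      by_cases hl : l = []
      · rw [FinPath.rng_of_nil (show (⟨p1.src, l, _, _⟩ : G.FinPath).edges = [] from hl)]
        have hνκ : ν = κ := by
          apply FinPath.ext' (hν.2.1.symm.trans hκ.2.1)
          rw [hsplit, hl, List.append_nil]
        show p1.src = q1.src
        have h1 : ν.rng = p1.src := hν.1
        have h2 : κ.rng = q1.src := hκ.1
        rw [← h1, ← h2, hνκ]
      · have hb : l.getLast? = some (l.getLast hl) := List.getLast?_eq_getLast hl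
        rw [show FinPath.rng ⟨p1.src, l, _, _⟩ = G.r (l.getLast hl) from
          FinPath.rng_eq_of_getLast? hb]
        have hκl : κ.edges.getLast? = some (l.getLast hl) := by
          rw [hsplit]
          exact List.mem_getLast?_append_of_mem_getLast? hb
        rw [← FinPath.rng_eq_of_getLast? hκl]
        exact hκ.1
  · obtain ⟨p1 | p1, hp⟩ := p
    · exact hν.2.elim
    obtain ⟨q1 | q1, hq⟩ := q
    · exact hκ.2.elim
    obtain ⟨hr1, hA, hB⟩ := hν
    obtain ⟨hr2, hC, hD⟩ := hκ
    set l := κ.edges.drop ν.edges.length with hldef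
    have hllen : l.length = κ.edges.length - ν.edges.length := by
      rw [hldef, List.length_drop]
    have hlget : ∀ (i : ℕ) (h : i < l.length), l.get ⟨i, h⟩ = x1.edges (ν.edges.length + i) := by
      intro i h
      have h2 : ν.edges.length + i < κ.edges.length := by omega
      have : l.get ⟨i, h⟩ = κ.edges.get ⟨ν.edges.length + i, h2⟩ := by
        simp [hldef, List.getElem_drop]
      rw [this, ← hC _ h2]
    have hsplit : κ.edges = ν.edges ++ l := by
      have htake : κ.edges.take ν.edges.length = ν.edges := by
        apply List.ext_get
        · rw [List.length_take]
          omega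
        · intro i h1 h2
          have h3 : i < κ.edges.length := by omega
          have : (κ.edges.take ν.edges.length).get ⟨i, h1⟩ = κ.edges.get ⟨i, h3⟩ := by
            simp [List.getElem_take]
          rw [this, ← hC _ h3, hA _ h2]
      conv_lhs => rw [← List.take_append_drop ν.edges.length κ.edges]
      rw [htake]
    refine ⟨⟨BPath.src ⟨Sum.inr p1, hp⟩, l, ?_, chain'_of_isChain (List.IsChain.drop (isChain_of_chain' κ.chain) _)⟩, ⟨?_, ?_, ?_⟩, hsplit⟩
    · intro f hf
      obtain ⟨hlen0, hf0⟩ := head?_get' hf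
      rw [← hf0, hlget 0 hlen0]
      show G.s (x1.edges (ν.edges.length + 0)) = G.s (p1.edges 0)
      rw [hB 0]
    · -- rng = q.src
      cases hgl : l.getLast? with
      | none =>
        have hl : l = [] := getLast?_none' hgl
        rw [FinPath.rng_of_nil
          (show (⟨BPath.src ⟨Sum.inr p1, hp⟩, l, _, _⟩ : G.FinPath).edges = [] from hl)]
        have hlen : κ.edges.length = ν.edges.length := by
          have h5 := hllen
          rw [hl] at h5
          simp at h5
          omega
        show G.s (p1.edges 0) = G.s (q1.edges 0)
        rw [← hB 0, ← hD 0, hlen]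
      | some b =>
        have hb : l.getLast? = some b := hgl
        rw [show FinPath.rng ⟨BPath.src ⟨Sum.inr p1, hp⟩, l, _, _⟩ = G.r b from
          FinPath.rng_eq_of_getLast? hb]
        have hκl : κ.edges.getLast? = some b := by
          rw [hsplit]
          exact List.mem_getLast?_append_of_mem_getLast? hb
        rw [← FinPath.rng_eq_of_getLast? hκl]
        exact hr2
    · intro i hi
      rw [hlget i hi, ← hB i]
    · intro i
      show p1.edges (l.length + i) = q1.edges i
      have h1 : ν.edges.length + (l.length + i) = κ.edges.length + i := by omega
      rw [← hD i, ← hB (l.length + i), h1]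

theorem IsCat.eq_of_nil {μ : G.FinPath} {p x : G.BPath} (h : IsCat μ p x)
    (h0 : μ.edges = []) : p = x := by
  obtain ⟨p1 | p1, hp⟩ := p <;> obtain ⟨x1 | x1, hx⟩ := x
  · apply BPath.ext'
    simp only
    congr 1
    refine (FinPath.ext' ?_ ?_).symm
    · rw [h.2.1, ← FinPath.rng_of_nil h0, h.1]
      rfl
    · rw [h.2.2, h0, List.nil_append]
  · exact h.2.elim
  · exact h.2.elim
  · apply BPath.ext'
    simp only
    congr 1
    apply InfPath.ext'
    funext i
    have := h.2.2 i
    rw [h0] at this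
    simpa using this.symm

theorem isCat_unique {μ ν : G.FinPath} {p q x : G.BPath} (hμ : IsCat μ p x) (hν : IsCat ν q x)
    (h : μ.edges = ν.edges) : p = q := by
  obtain ⟨τ, hτ, he⟩ := isCat_split hμ hν (le_of_eq (by rw [h]))
  have h0 : τ.edges = [] := by
    have h2 : ν.edges.length = μ.edges.length + τ.edges.length := by
      rw [he, List.length_append]
    rw [h] at h2
    have : τ.edges.length = 0 := by omega
    exact List.length_eq_zero_iff.mp this
  exact (hτ.eq_of_nil h0).symm

theorem tailEqLag_refl (x : G.BPath) : TailEqLag x x 0 :=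
  ⟨vertexPath G x.src, vertexPath G x.src, x, isCat_nil rfl rfl, isCat_nil rfl rfl,
    by simp [FinPath.length]⟩

theorem tailEqLag_symm {x y : G.BPath} {k : ℤ} (h : TailEqLag x y k) : TailEqLag y x (-k) := by
  obtain ⟨μ, ν, p, hμ, hν, hk⟩ := h
  exact ⟨ν, μ, p, hν, hμ, by omega⟩

theorem IsCat.tailEqLag {μ : G.FinPath} {p q : G.BPath} (h : IsCat μ p q) :
    TailEqLag q p (μ.length : ℤ) :=
  ⟨μ, vertexPath G p.src, p, h, isCat_nil rfl rfl, by simp [FinPath.length]⟩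

theorem tailEqLag_trans {x y z : G.BPath} {k l : ℤ} (h1 : TailEqLag x y k)
    (h2 : TailEqLag y z l) : TailEqLag x z (k + l) := by
  obtain ⟨μ, ν, p, hμ, hν, hk⟩ := h1
  obtain ⟨μ', ν', q, hμ', hν', hl⟩ := h2
  simp only [FinPath.length] at hk hl
  rcases Nat.le_total ν.edges.length μ'.edges.length with hle | hle
  · obtain ⟨τ, hτ, hsp⟩ := isCat_split hν hμ' hle
    have hlen : μ'.edges.length = ν.edges.length + τ.edges.length := by
      rw [hsp, List.length_append]
    have hcr : μ.rng = τ.src := hμ.1.trans hτ.src_eq'.symm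
    refine ⟨μ.comp τ hcr, ν', q, isCat_comp hμ hτ hcr, hν', ?_⟩
    simp only [FinPath.length, FinPath.comp_edges, List.length_append]
    push_cast
    omega
  · obtain ⟨τ, hτ, hsp⟩ := isCat_split hμ' hν hle
    have hlen : ν.edges.length = μ'.edges.length + τ.edges.length := by
      rw [hsp, List.length_append]
    have hcr : ν'.rng = τ.src := hν'.1.trans hτ.src_eq'.symm
    refine ⟨μ, ν'.comp τ hcr, p, hμ, isCat_comp hν' hτ hcr, ?_⟩
    simp only [FinPath.length, FinPath.comp_edges, List.length_append]
    push_cast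
    omega

theorem TailEq.refl (x : G.BPath) : TailEq x x := ⟨0, tailEqLag_refl x⟩

theorem TailEq.symm' {x y : G.BPath} (h : TailEq x y) : TailEq y x :=
  h.elim fun k hk => ⟨-k, tailEqLag_symm hk⟩

theorem TailEq.trans' {x y z : G.BPath} (h1 : TailEq x y) (h2 : TailEq y z) : TailEq x z := by
  obtain ⟨k, hk⟩ := h1
  obtain ⟨l, hl⟩ := h2
  exact ⟨k + l, tailEqLag_trans hk hl⟩

theorem mem_orbit_self (x : G.BPath) : x ∈ orbit x := TailEq.refl x

theorem mem_orbit_iff {x y : G.BPath} : y ∈ orbit x ↔ TailEq y x := Iff.rfl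

theorem orbit_eq {x y : G.BPath} (h : TailEq x y) : orbit x = orbit y :=
  Set.ext fun z => ⟨fun hz => hz.trans' h, fun hz => hz.trans' h.symm'⟩

theorem lag_self_eq_zero {x : G.BPath} (hx : ¬ IsRational x) {k : ℤ}
    (h : TailEqLag x x k) : k = 0 := by
  by_contra hk0
  obtain ⟨μ, ν, p, hμ, hν, hk⟩ := h
  simp only [FinPath.length] at hk
  have hxp : TailEq x p := ⟨_, hμ.tailEqLag⟩
  rcases Nat.le_total ν.edges.length μ.edges.length with hle | hle
  · obtain ⟨τ, hτ, hsp⟩ := isCat_split hν hμ hle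
    have hlen : μ.edges.length = ν.edges.length + τ.edges.length := by
      rw [hsp, List.length_append]
    have hpos : 0 < τ.length := by
      simp only [FinPath.length]
      omega
    exact hx ⟨τ, p, hpos, hτ, hxp⟩
  · obtain ⟨τ, hτ, hsp⟩ := isCat_split hμ hν hle
    have hlen : ν.edges.length = μ.edges.length + τ.edges.length := by
      rw [hsp, List.length_append]
    have hpos : 0 < τ.length := by
      simp only [FinPath.length]
      omega
    exact hx ⟨τ, p, hpos, hτ, hxp⟩

theorem lag_unique {x y : G.BPath} (hx : ¬ IsRational x) {k l : ℤ}
    (h1 : TailEqLag y x k) (h2 : TailEqLag y x l) : k = l := by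
  have := lag_self_eq_zero hx (tailEqLag_trans (tailEqLag_symm h1) h2)
  omega

section ModuleLemmas

variable {K : Type} [Field K] {x : G.BPath} {M : Type} [AddCommGroup M] [Module K M]
  [Module (LPA G K) M] [IsScalarTower K (LPA G K) M]
  (sp : ChenSpec G K (fun _ => 1) x M)

theorem mem_orbit_cat₁ {μ : G.FinPath} {d q : G.BPath} (h : IsCat μ d q)
    (hq : q ∈ orbit x) : d ∈ orbit x :=
  TailEq.trans' ⟨-(μ.length : ℤ), tailEqLag_symm h.tailEqLag⟩ hq

theorem mem_orbit_cat₂ {μ : G.FinPath} {d q : G.BPath} (h : IsCat μ d q)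
    (hd : d ∈ orbit x) : q ∈ orbit x :=
  TailEq.trans' ⟨(μ.length : ℤ), h.tailEqLag⟩ hd

theorem act_e' {e : G.E} {p q : orbit x} (h : IsCat (singleE G e) (p : G.BPath) (q : G.BPath)) :
    ofE G K e • sp.basis p = sp.basis q := by
  have := sp.act_e e p q h
  simpa using this

theorem act_g' {e : G.E} {p q : orbit x} (h : IsCat (singleE G e) (p : G.BPath) (q : G.BPath)) :
    ofG G K e • sp.basis q = sp.basis p := by
  have := sp.act_g e p q h
  simpa using this

theorem isCat_firstEdge' {μ : G.FinPath} {p q : G.BPath} (h : IsCat μ p q) {e : G.E}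
    {t : List G.E} (hμ : μ.edges = e :: t) : firstEdge q = some e := by
  obtain ⟨p1 | p1, hp⟩ := p <;> obtain ⟨q1 | q1, hq⟩ := q
  · show q1.edges.head? = some e
    rw [h.2.2, hμ]
    rfl
  · exact h.2.elim
  · exact h.2.elim
  · show some (q1.edges 0) = some e
    have h0 : 0 < μ.edges.length := by rw [hμ]; simp
    have := h.2.1 0 h0
    rw [this, List.get_eq_getElem]
    congr 1
    simp [hμ]

theorem smul_prodE : ∀ (l : List G.E) (μ : G.FinPath), μ.edges = l →
    ∀ (p q : orbit x), IsCat μ (p : G.BPath) (q : G.BPath) →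
    ((l.map (ofE G K)).prod) • sp.basis p = sp.basis q := by
  intro l
  induction l with
  | nil =>
    intro μ hμ p q hcat
    have h1 : (p : G.BPath) = q := hcat.eq_of_nil hμ
    have hpq : p = q := Subtype.ext h1
    subst hpq
    simp
  | cons e t ih =>
    intro μ hμ p q hcat
    obtain ⟨mid, hmid⟩ := exists_peel (isCat_firstEdge' hcat hμ)
    obtain ⟨τ, hτ, hedges⟩ := isCat_split hmid hcat (by rw [hμ]; simp)
    have hτe : τ.edges = t := by
      rw [hμ] at hedges
      simpa using hedges.symm
    have hmem : mid ∈ orbit x := mem_orbit_cat₁ hmid q.2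
    rw [List.map_cons, List.prod_cons, mul_smul,
      ih τ hτe p ⟨mid, hmem⟩ hτ, act_e' sp hmid]

theorem smul_pathElem {μ : G.FinPath} {p q : orbit x}
    (h : IsCat μ (p : G.BPath) (q : G.BPath)) :
    pathElem G K μ • sp.basis p = sp.basis q := by
  show (ofV G K μ.src * (μ.edges.map (ofE G K)).prod) • _ = _
  rw [mul_smul, smul_prodE sp μ.edges μ rfl p q h, sp.act_v μ.src q,
    if_pos h.src_eq']

theorem smul_starL : ∀ (l : List G.E) (ν : G.FinPath), ν.edges = l →
    ∀ (p r : orbit x), IsCat ν (r : G.BPath) (p : G.BPath) →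
    ((l.reverse.map (ofG G K)).prod) • sp.basis p = sp.basis r := by
  intro l
  induction l with
  | nil =>
    intro ν hν p r hcat
    have h1 : (r : G.BPath) = p := hcat.eq_of_nil hν
    have hpq : r = p := Subtype.ext h1
    subst hpq
    simp
  | cons e t ih =>
    intro ν hν p r hcat
    obtain ⟨mid, hmid⟩ := exists_peel (isCat_firstEdge' hcat hν)
    obtain ⟨τ, hτ, hedges⟩ := isCat_split hmid hcat (by rw [hν]; simp)
    have hτe : τ.edges = t := by
      rw [hν] at hedges
      simpa using hedges.symm
    have hmem : mid ∈ orbit x := mem_orbit_cat₁ hmid p.2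
    rw [List.reverse_cons, List.map_append, List.prod_append, List.map_singleton,
      List.prod_singleton, mul_smul, act_g' sp (q := p) (p := ⟨mid, hmem⟩) hmid,
      ih τ hτe ⟨mid, hmem⟩ r hτ]

theorem smul_starL_zero : ∀ (l : List G.E) (p : orbit x),
    (¬ ∃ (ν : G.FinPath) (r : G.BPath), ν.edges = l ∧ IsCat ν r (p : G.BPath)) →
    ((l.reverse.map (ofG G K)).prod) • sp.basis p = 0 := by
  intro l
  induction l with
  | nil =>
    intro p hne
    exact absurd ⟨vertexPath G (p : G.BPath).src, p, rfl, isCat_nil rfl rfl⟩ hne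
  | cons e t ih =>
    intro p hne
    rw [List.reverse_cons, List.map_append, List.prod_append, List.map_singleton,
      List.prod_singleton, mul_smul]
    by_cases hmid : ∃ mid, IsCat (singleE G e) mid (p : G.BPath)
    · obtain ⟨mid, hm⟩ := hmid
      have hmem : mid ∈ orbit x := mem_orbit_cat₁ hm p.2
      rw [act_g' sp (q := p) (p := ⟨mid, hmem⟩) hm]
      apply ih ⟨mid, hmem⟩
      rintro ⟨τ, r, hτe, hτ⟩
      apply hne
      have hcr : (singleE G e).rng = τ.src := hm.1.trans hτ.src_eq'.symm
      exact ⟨(singleE G e).comp τ hcr, r, by simp [hτe], isCat_comp hm hτ hcr⟩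
    · rw [sp.act_g_zero e p hmid, smul_zero]

theorem smul_pathStar {ν : G.FinPath} {p r : orbit x}
    (h : IsCat ν (r : G.BPath) (p : G.BPath)) :
    pathStarElem G K ν • sp.basis p = sp.basis r := by
  show ((ν.edges.reverse.map (ofG G K)).prod * ofV G K ν.src) • _ = _
  rw [mul_smul, sp.act_v, if_pos h.src_eq', smul_starL sp ν.edges ν rfl p r h]

theorem smul_pathStar_zero {ν : G.FinPath} {p : orbit x}
    (h : ¬ ∃ r : G.BPath, IsCat ν r (p : G.BPath)) :
    pathStarElem G K ν • sp.basis p = 0 := by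
  show ((ν.edges.reverse.map (ofG G K)).prod * ofV G K ν.src) • _ = _
  rw [mul_smul, sp.act_v]
  by_cases hv : ν.src = BPath.src (p : G.BPath)
  · rw [if_pos hv]
    apply smul_starL_zero sp ν.edges p
    rintro ⟨ν', r, hedges, hcat⟩
    refine h ⟨r, ?_⟩
    have hee : ν' = ν := FinPath.ext' (hcat.src_eq'.trans hv.symm) hedges
    rwa [hee] at hcat
  · rw [if_neg hv, smul_zero]

theorem smul_op {μ ν : G.FinPath} {p q d : orbit x} (h1 : IsCat ν (d : G.BPath) (p : G.BPath))
    (h2 : IsCat μ (d : G.BPath) (q : G.BPath)) :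
    (pathElem G K μ * pathStarElem G K ν) • sp.basis p = sp.basis q := by
  rw [mul_smul, smul_pathStar sp h1, smul_pathElem sp h2]

theorem smul_op_zero {μ ν : G.FinPath} {p : orbit x}
    (h : ¬ ∃ r : G.BPath, IsCat ν r (p : G.BPath)) :
    (pathElem G K μ * pathStarElem G K ν) • sp.basis p = 0 := by
  rw [mul_smul, smul_pathStar_zero sp h, smul_zero]

theorem smul_proj_e {e : G.E} {q : orbit x} :
    (pathElem G K (singleE G e) * pathStarElem G K (singleE G e)) • sp.basis q =
      if firstEdge (q : G.BPath) = some e then sp.basis q else 0 := by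
  by_cases h : firstEdge (q : G.BPath) = some e
  · rw [if_pos h]
    obtain ⟨mid, hm⟩ := exists_peel h
    have hmem : mid ∈ orbit x := mem_orbit_cat₁ hm q.2
    exact smul_op sp (d := ⟨mid, hmem⟩) hm hm
  · rw [if_neg h]
    exact smul_op_zero sp fun ⟨r, hr⟩ => h (isCat_firstEdge hr)

theorem coord_push (a : LPA G K) (z : M) (F : orbit x → orbit x) (Q : orbit x → Prop)
    (hdiag : ∀ q ∈ (sp.basis.repr z).support,
      a • sp.basis q = if Q q then sp.basis (F q) else 0) :
    ∀ q₀, sp.basis.repr (a • z) q₀ =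
      ∑ q ∈ (sp.basis.repr z).support,
        (sp.basis.repr z q) * (if Q q ∧ F q = q₀ then 1 else 0) := by
  classical
  intro q₀
  have hz : a • z = ∑ q ∈ (sp.basis.repr z).support,
      (sp.basis.repr z q) • (if Q q then sp.basis (F q) else 0) := by
    conv_lhs => rw [← sp.basis.linearCombination_repr z]
    rw [Finsupp.linearCombination_apply, Finsupp.sum, Finset.smul_sum]
    exact Finset.sum_congr rfl fun q hq => by rw [smul_comm, hdiag q hq]
  rw [hz, map_sum, Finsupp.finset_sum_apply]
  apply Finset.sum_congr rfl
  intro q _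
  rw [map_smul, Finsupp.smul_apply]
  by_cases hQ : Q q
  · rw [if_pos hQ, Module.Basis.repr_self, Finsupp.single_apply]
    by_cases hF : F q = q₀
    · rw [if_pos hF, if_pos ⟨hQ, hF⟩, smul_eq_mul]
    · rw [if_neg hF, if_neg (by tauto), smul_eq_mul]
  · rw [if_neg hQ, if_neg (by tauto)]
    simp

theorem coord_push_zero (a : LPA G K) (z : M) (F : orbit x → orbit x) (Q : orbit x → Prop)
    (hdiag : ∀ q ∈ (sp.basis.repr z).support,
      a • sp.basis q = if Q q then sp.basis (F q) else 0)
    {q₀ : orbit x} (h : ∀ q ∈ (sp.basis.repr z).support, Q q → F q ≠ q₀) :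
    sp.basis.repr (a • z) q₀ = 0 := by
  rw [coord_push sp a z F Q hdiag q₀]
  apply Finset.sum_eq_zero
  intro q hq
  rw [if_neg (by rintro ⟨h1, h2⟩; exact h q hq h1 h2), mul_zero]

theorem coord_push_eq (a : LPA G K) (z : M) (F : orbit x → orbit x) (Q : orbit x → Prop)
    (hdiag : ∀ q ∈ (sp.basis.repr z).support,
      a • sp.basis q = if Q q then sp.basis (F q) else 0)
    {qq : orbit x} (hqq : qq ∈ (sp.basis.repr z).support) (hQ : Q qq)
    (hinj : ∀ q ∈ (sp.basis.repr z).support, Q q → F q = F qq → q = qq) :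
    sp.basis.repr (a • z) (F qq) = sp.basis.repr z qq := by
  rw [coord_push sp a z F Q hdiag (F qq)]
  rw [Finset.sum_eq_single qq]
  · rw [if_pos ⟨hQ, rfl⟩, mul_one]
  · intro q hq hne
    rw [if_neg (by rintro ⟨h1, h2⟩; exact hne (hinj q hq h1 h2)), mul_zero]
  · intro h
    exact absurd hqq h

theorem support_smul_subset (a : LPA G K) (z : M) (F : orbit x → orbit x) (Q : orbit x → Prop)
    (hdiag : ∀ q ∈ (sp.basis.repr z).support,
      a • sp.basis q = if Q q then sp.basis (F q) else 0) :
    (sp.basis.repr (a • z)).support ⊆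
      ((sp.basis.repr z).support.filter Q).image F := by
  classical
  intro q₀ hq₀
  by_contra hq₀'
  rw [Finsupp.mem_support_iff] at hq₀
  apply hq₀
  apply coord_push_zero sp a z F Q hdiag
  intro q hq h1 h2
  exact hq₀' (Finset.mem_image.mpr ⟨q, Finset.mem_filter.mpr ⟨hq, h1⟩, h2⟩)

end ModuleLemmas

section Simplicity

variable {K : Type} [Field K] {x : G.BPath} {M : Type} [AddCommGroup M] [Module K M]
  [Module (LPA G K) M] [IsScalarTower K (LPA G K) M]
  (sp : ChenSpec G K (fun _ => 1) x M)

theorem isCat_inf {μ : G.FinPath} {p q : G.BPath} (h : IsCat μ p q) (hq : q.IsInfinite) :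
    p.IsInfinite := by
  obtain ⟨ρ, hρ⟩ := hq
  obtain ⟨q1, hq2⟩ := q
  have hρ' : q1 = Sum.inr ρ := hρ
  subst hρ'
  obtain ⟨p1 | p1, hp⟩ := p
  · exact h.2.elim
  · exact ⟨p1, rfl⟩

theorem exists_prefix_inf {p : G.BPath} (hp : p.IsInfinite) (n : ℕ) :
    ∃ (μ : G.FinPath) (d : G.BPath), μ.edges.length = n ∧ d.IsInfinite ∧ IsCat μ d p := by
  induction n with
  | zero => exact ⟨vertexPath G p.src, p, rfl, hp, isCat_nil rfl rfl⟩
  | succ n ih =>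
    obtain ⟨μ, d, hlen, hdinf, hcat⟩ := ih
    obtain ⟨ρ, hρ⟩ := hdinf
    have hfe : firstEdge d = some (ρ.edges 0) := by
      unfold firstEdge
      rw [hρ]
    obtain ⟨d', hd'⟩ := exists_peel hfe
    have hcr : μ.rng = (singleE G (ρ.edges 0)).src := by
      rw [singleE_src]
      exact hcat.1.trans (firstEdge_src hfe).symm
    refine ⟨μ.comp (singleE G (ρ.edges 0)) hcr, d', by simp [hlen], ?_,
      isCat_comp hcat hd' hcr⟩
    exact isCat_inf hd' ⟨ρ, hρ⟩

theorem fin_prefix_le {ν : G.FinPath} {d q : G.BPath} (h : IsCat ν d q) {ξ : G.FinPath}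
    (hq : q.1 = Sum.inl ξ) : ν.edges.length ≤ ξ.edges.length := by
  obtain ⟨q1, hq2⟩ := q
  have hq' : q1 = Sum.inl ξ := hq
  subst hq'
  obtain ⟨d1 | d1, hd⟩ := d
  · have := h.2.2
    rw [this, List.length_append]
    omega
  · exact h.2.elim

theorem eq_of_prefix_all {p q : G.BPath} (hp : p.IsInfinite)
    (hpre : ∀ ν : G.FinPath, (∃ d, IsCat ν d p) → (∃ d, IsCat ν d q)) : p = q := by
  obtain ⟨ρ, hρ⟩ := hp
  have hqinf : q.IsInfinite := by
    obtain ⟨q1 | ξq, hq2⟩ := q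
    · exfalso
      obtain ⟨μ, d, hlen, _, hcat⟩ := exists_prefix_inf ⟨ρ, hρ⟩ (q1.edges.length + 1)
      obtain ⟨d', hd'⟩ := hpre μ ⟨d, hcat⟩
      have := fin_prefix_le hd' (rfl : (⟨Sum.inl q1, hq2⟩ : G.BPath).1 = Sum.inl q1)
      omega
    · exact ⟨ξq, rfl⟩
  obtain ⟨σ, hσ⟩ := hqinf
  apply BPath.ext'
  rw [hρ, hσ]
  congr 1
  apply InfPath.ext'
  funext n
  obtain ⟨μ, d, hlen, _, hcat⟩ := exists_prefix_inf ⟨ρ, hρ⟩ (n + 1)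
  obtain ⟨d', hd'⟩ := hpre μ ⟨d, hcat⟩
  have hn : n < μ.edges.length := by omega
  -- extract edge equality
  obtain ⟨p1, hp2⟩ := p
  have hρ' : p1 = Sum.inr ρ := hρ
  subst hρ'
  obtain ⟨q1, hq2⟩ := q
  have hσ' : q1 = Sum.inr σ := hσ
  subst hσ'
  obtain ⟨dd1 | dd1, hdd⟩ := d
  · exact hcat.2.elim
  obtain ⟨dd2 | dd2, hdd2⟩ := d'
  · exact hd'.2.elim
  rw [hcat.2.1 n hn, hd'.2.1 n hn]

theorem isCat_end {p : G.BPath} {ξ : G.FinPath} (hξ : p.1 = Sum.inl ξ) :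
    IsCat ξ (vertexBPath G ξ.rng (p.2 ξ hξ)) p := by
  obtain ⟨p1, hp2⟩ := p
  have hξ' : p1 = Sum.inl ξ := hξ
  subst hξ'
  exact ⟨rfl, rfl, (List.append_nil _).symm⟩

@[simp] theorem firstEdge_vertexBPath (v : G.V) (h : IsSingular G v) :
    firstEdge (vertexBPath G v h) = none := rfl

@[simp] theorem src_vertexBPath (v : G.V) (h : IsSingular G v) :
    (vertexBPath G v h).src = v := rfl

theorem eq_end_of_firstEdge_none {q : G.BPath} (h1 : firstEdge q = none) :
    q.1 = Sum.inl (vertexPath G q.src) := by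
  obtain ⟨q1 | q1, hq2⟩ := q
  · have h1' : q1.edges.head? = none := h1
    have he : q1.edges = [] := List.head?_eq_none_iff.mp h1'
    show Sum.inl q1 = Sum.inl (vertexPath G q1.src)
    congr 1
    exact FinPath.ext' rfl he
  · exact absurd h1 (by simp [firstEdge])

theorem eq_of_len_zero {p q : G.BPath} (h1 : firstEdge p = none) (h2 : firstEdge q = none)
    (h3 : p.src = q.src) : p = q := by
  apply BPath.ext'
  rw [eq_end_of_firstEdge_none h1, eq_end_of_firstEdge_none h2, h3]

theorem ksmul_mem {P : Submodule (LPA G K) M} {z : M} (hz : z ∈ P) (c : K) : c • z ∈ P := by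
  rw [← algebraMap_smul (LPA G K) c z]
  exact P.smul_mem _ hz

theorem repr_single_eq {z : M} {i : orbit x} (h : (sp.basis.repr z).support ⊆ {i}) :
    z = (sp.basis.repr z i) • sp.basis i := by
  have h2 : sp.basis.repr z = Finsupp.single i (sp.basis.repr z i) :=
    Finsupp.support_subset_singleton.mp h
  apply sp.basis.repr.injective
  rw [map_smul, sp.basis.repr_self, Finsupp.smul_single, smul_eq_mul, mul_one]
  exact h2

theorem basis_mem_of_single {P : Submodule (LPA G K) M} {z : M} (hzP : z ∈ P)
    {i : orbit x} (h : (sp.basis.repr z).support ⊆ {i})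
    (hne : sp.basis.repr z i ≠ 0) : sp.basis i ∈ P := by
  set c := sp.basis.repr z i with hc
  have h2 := repr_single_eq sp h
  have h3 : sp.basis i = c⁻¹ • z := by
    conv_rhs => rw [h2, smul_smul, inv_mul_cancel₀ hne, one_smul]
  rw [h3]
  exact ksmul_mem hzP _

noncomputable def dropF (ν : G.FinPath) : orbit x → orbit x := fun q =>
  if h : ∃ d, IsCat ν d (q : G.BPath) then
    ⟨h.choose, mem_orbit_cat₁ h.choose_spec q.2⟩ else q

theorem dropF_spec {ν : G.FinPath} {q : orbit x} (h : ∃ d, IsCat ν d (q : G.BPath)) :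
    IsCat ν ((dropF (x := x) ν q : orbit x) : G.BPath) (q : G.BPath) := by
  simp only [dropF, dif_pos h]
  exact h.choose_spec

theorem dropF_eq {ν : G.FinPath} {q : orbit x} {d : G.BPath} (h : IsCat ν d (q : G.BPath)) :
    ((dropF (x := x) ν q : orbit x) : G.BPath) = d :=
  isCat_unique (dropF_spec ⟨d, h⟩) h rfl

theorem star_diag (ν : G.FinPath) (q : orbit x) :
    pathStarElem G K ν • sp.basis q =
      if (∃ d, IsCat ν d (q : G.BPath)) then sp.basis (dropF ν q) else 0 := by
  by_cases h : ∃ d, IsCat ν d (q : G.BPath)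
  · rw [if_pos h]
    exact smul_pathStar sp (dropF_spec h)
  · rw [if_neg h]
    exact smul_pathStar_zero sp h

theorem isolate_fin {P : Submodule (LPA G K) M} {z : M} (hzP : z ∈ P)
    {p₁ : orbit x} (hp₁ : p₁ ∈ (sp.basis.repr z).support)
    {ξ : G.FinPath} (hξ : (p₁ : G.BPath).1 = Sum.inl ξ) :
    ∃ p : orbit x, sp.basis p ∈ P := by
  classical
  set w := ξ.rng with hw
  have hsing : IsSingular G w := (p₁ : G.BPath).2 ξ hξ
  set endp : G.BPath := vertexBPath G w hsing with hendp
  have hcat1 : IsCat ξ endp (p₁ : G.BPath) := isCat_end hξ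
  have hendm : endp ∈ orbit x := mem_orbit_cat₁ hcat1 p₁.2
  set endo : orbit x := ⟨endp, hendm⟩ with hendo
  set z' := pathStarElem G K ξ • z with hz'
  have hz'P : z' ∈ P := P.smul_mem _ hzP
  set Q : orbit x → Prop := fun q => ∃ d, IsCat ξ d (q : G.BPath) with hQ
  have hdiag : ∀ q ∈ (sp.basis.repr z).support,
      pathStarElem G K ξ • sp.basis q = if Q q then sp.basis (dropF ξ q) else 0 :=
    fun q _ => star_diag sp ξ q
  have hQ1 : Q p₁ := ⟨endp, hcat1⟩
  have hFp₁ : dropF (x := x) ξ p₁ = endo :=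
    Subtype.ext (dropF_eq hcat1)
  have hinj : ∀ q ∈ (sp.basis.repr z).support, Q q → dropF ξ q = dropF ξ p₁ → q = p₁ := by
    intro q _ hq hFq
    apply Subtype.ext
    have h5 := dropF_spec (x := x) hQ1
    rw [← hFq] at h5
    exact isCat_det (dropF_spec hq) h5
  have hcoord : sp.basis.repr z' (dropF ξ p₁) = sp.basis.repr z p₁ :=
    coord_push_eq sp _ z (dropF ξ) Q hdiag hp₁ hQ1 hinj
  have hcoord' : sp.basis.repr z' endo ≠ 0 := by
    rw [← hFp₁, hcoord]
    exact Finsupp.mem_support_iff.mp hp₁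
  have hendsupp : endo ∈ (sp.basis.repr z').support := Finsupp.mem_support_iff.mpr hcoord'
  -- every element of supp z' has source w
  have hsrc : ∀ q' ∈ (sp.basis.repr z').support, (q' : G.BPath).src = w := by
    intro q' hq'
    have := support_smul_subset sp _ z (dropF ξ) Q hdiag hq'
    obtain ⟨q, hq, hFq⟩ := Finset.mem_image.mp this
    obtain ⟨hqs, hqQ⟩ := Finset.mem_filter.mp hq
    have h2 := dropF_spec (x := x) (ν := ξ) hqQ
    rw [hFq] at h2
    exact h2.1.symm
  rcases hsing with hsink | hemit
  · -- sink: every support element of z' has no first edge, hence equals endp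
    have hsub : (sp.basis.repr z').support ⊆ {endo} := by
      intro q' hq'
      have hnone : firstEdge (q' : G.BPath) = none := by
        cases hfe : firstEdge (q' : G.BPath) with
        | none => rfl
        | some e =>
          exact absurd (firstEdge_src hfe ▸ (hsrc q' hq') ▸ rfl : G.s e = w)
            (hsink e)
      have h8 : (q' : G.BPath) = endp :=
        eq_of_len_zero hnone (by simp [hendp]; rfl) (by rw [hsrc q' hq']; simp [hendp]; rfl)
      have h9 : q' = endo := Subtype.ext h8
      simp [h9]
    exact ⟨endo, basis_mem_of_single sp hz'P hsub hcoord'⟩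
  · -- infinite emitter: project away first edges
    set E₀ : Finset G.E :=
      (sp.basis.repr z').support.biUnion (fun q' => (firstEdge (q' : G.BPath)).toFinset)
      with hE₀
    set a₂ : LPA G K := ofV G K w -
      ∑ e ∈ E₀, pathElem G K (singleE G e) * pathStarElem G K (singleE G e) with ha₂
    set Q₂ : orbit x → Prop := fun q => firstEdge (q : G.BPath) = none with hQ₂
    have hdiag₂ : ∀ q' ∈ (sp.basis.repr z').support,
        a₂ • sp.basis q' = @ite M (Q₂ q') (Classical.propDecidable _) (sp.basis (id q')) 0 := by
      intro q' hq'
      rw [ha₂, sub_smul, Finset.sum_smul]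
      have hv : ofV G K w • sp.basis q' = sp.basis q' := by
        rw [sp.act_v, if_pos (hsrc q' hq').symm]
      rw [hv]
      have hterm : ∀ e ∈ E₀,
          (pathElem G K (singleE G e) * pathStarElem G K (singleE G e)) • sp.basis q' =
            if firstEdge (q' : G.BPath) = some e then sp.basis q' else 0 :=
        fun e _ => smul_proj_e sp
      rw [Finset.sum_congr rfl hterm]
      by_cases hfe : firstEdge (q' : G.BPath) = none
      · rw [if_pos (show Q₂ q' from hfe)]
        have hz9 : ∀ e ∈ E₀, (if firstEdge (q' : G.BPath) = some e then sp.basis q' else 0) =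
            0 := by
          intro e _
          rw [if_neg (by rw [hfe]; simp)]
        rw [Finset.sum_congr rfl hz9, Finset.sum_const_zero, sub_zero]
        rfl
      · obtain ⟨e₀, hfe₀⟩ := Option.ne_none_iff_exists'.mp hfe
        rw [if_neg (show ¬ Q₂ q' from hfe)]
        have he₀ : e₀ ∈ E₀ := by
          rw [hE₀]
          apply Finset.mem_biUnion.mpr ⟨q', hq', ?_⟩
          simp [hfe₀]
        have hsum : ∑ e ∈ E₀,
            (if firstEdge (q' : G.BPath) = some e then sp.basis q' else 0) = sp.basis q' := by
          rw [Finset.sum_eq_single e₀]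
          · rw [if_pos hfe₀]
          · intro e _ hne
            rw [if_neg (by rw [hfe₀]; simpa using (Ne.symm hne))]
          · intro h
            exact absurd he₀ h
        rw [hsum, sub_self]
    set z'' := a₂ • z' with hz''
    have hz''P : z'' ∈ P := P.smul_mem _ hz'P
    have hQ₂end : Q₂ endo := by simp [hQ₂, hendo, hendp]; rfl
    have hcoord₂ : sp.basis.repr z'' (id endo) = sp.basis.repr z' endo :=
      coord_push_eq sp a₂ z' id Q₂ hdiag₂ hendsupp hQ₂end
        (fun q _ _ h => h)
    have hsub : (sp.basis.repr z'').support ⊆ {endo} := by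
      intro q' hq'
      have := support_smul_subset sp a₂ z' id Q₂ hdiag₂ hq'
      obtain ⟨q, hq, hFq⟩ := Finset.mem_image.mp this
      simp only [Finset.mem_filter] at hq
      obtain ⟨hqs, hqQ⟩ := hq
      have h8 : (q : G.BPath) = endp :=
        eq_of_len_zero hqQ (by simp [hendp]; rfl) (by rw [hsrc q hqs]; simp [hendp]; rfl)
      have h9 : q = endo := Subtype.ext h8
      rw [← hFq]
      simp [h9]
    refine ⟨endo, basis_mem_of_single sp hz''P hsub ?_⟩
    have hcoord₂' : sp.basis.repr z'' endo = sp.basis.repr z' endo := hcoord₂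
    rw [hcoord₂']
    exact hcoord'

theorem isolate (P : Submodule (LPA G K) M) :
    ∀ (n : ℕ) (z : M), (sp.basis.repr z).support.card = n → z ∈ P → z ≠ 0 →
      ∃ p : orbit x, sp.basis p ∈ P := by
  intro n
  induction n using Nat.strong_induction_on with
  | _ n ih =>
  intro z hcard hzP hz0
  classical
  have hsupp : (sp.basis.repr z).support.Nonempty := by
    rw [Finsupp.support_nonempty_iff]
    intro h0
    exact hz0 (by simpa using sp.basis.repr.map_eq_zero_iff.mp h0)
  by_cases hfin : ∃ q ∈ (sp.basis.repr z).support, ∃ ξ : G.FinPath,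
      (q : G.BPath).1 = Sum.inl ξ
  · obtain ⟨q, hq, ξ, hξ⟩ := hfin
    exact isolate_fin sp hzP hq hξ
  · push_neg at hfin
    obtain ⟨p₁, hp₁⟩ := hsupp
    rcases Nat.lt_or_ge 1 n with hn | hn
    · -- at least two elements: shrink
      obtain ⟨a, ha, b, hb, hab⟩ := Finset.one_lt_card.mp (hcard ▸ hn)
      have hpair : ∃ p₂ ∈ (sp.basis.repr z).support, p₂ ≠ p₁ := by
        by_cases h : a = p₁
        · exact ⟨b, hb, fun hh => hab (h ▸ hh ▸ rfl)⟩
        · exact ⟨a, ha, h⟩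
      obtain ⟨p₂, hp₂, hne⟩ := hpair
      have hp₁inf : (p₁ : G.BPath).IsInfinite := by
        rcases hv : (p₁ : G.BPath).1 with ξ | ρ
        · exact absurd hv (hfin p₁ hp₁ ξ)
        · exact ⟨ρ, hv⟩
      -- find a separating prefix
      have hsep : ∃ ν : G.FinPath, (∃ d, IsCat ν d (p₁ : G.BPath)) ∧
          ¬ (∃ d, IsCat ν d (p₂ : G.BPath)) := by
        by_contra hcon
        push_neg at hcon
        have : (p₁ : G.BPath) = (p₂ : G.BPath) :=
          eq_of_prefix_all hp₁inf (fun ν hν => hcon ν hν)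
        exact hne (Subtype.ext this.symm)
      obtain ⟨ν, hν₁, hν₂⟩ := hsep
      set Q : orbit x → Prop := fun q => ∃ d, IsCat ν d (q : G.BPath) with hQ
      set z' := pathStarElem G K ν • z with hz'
      have hdiag : ∀ q ∈ (sp.basis.repr z).support,
          pathStarElem G K ν • sp.basis q = if Q q then sp.basis (dropF ν q) else 0 :=
        fun q _ => star_diag sp ν q
      have hinj : ∀ q ∈ (sp.basis.repr z).support, Q q →
          dropF ν q = dropF ν p₁ → q = p₁ := by
        intro q _ hq hFq
        apply Subtype.ext
        have h5 := dropF_spec (x := x) hν₁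
        rw [← hFq] at h5
        exact isCat_det (dropF_spec hq) h5
      have hcoord : sp.basis.repr z' (dropF ν p₁) = sp.basis.repr z p₁ :=
        coord_push_eq sp _ z (dropF ν) Q hdiag hp₁ hν₁ hinj
      have hz'0 : z' ≠ 0 := by
        intro h0
        apply Finsupp.mem_support_iff.mp hp₁
        rw [← hcoord, h0]
        simp
      have hcard' : (sp.basis.repr z').support.card < n := by
        calc (sp.basis.repr z').support.card
            ≤ (((sp.basis.repr z).support.filter Q).image (dropF ν)).card :=
              Finset.card_le_card (support_smul_subset sp _ z (dropF ν) Q hdiag)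
          _ ≤ ((sp.basis.repr z).support.filter Q).card := Finset.card_image_le
          _ ≤ ((sp.basis.repr z).support.erase p₂).card := by
              apply Finset.card_le_card
              intro q hq
              obtain ⟨hqs, hqQ⟩ := Finset.mem_filter.mp hq
              apply Finset.mem_erase.mpr ⟨?_, hqs⟩
              intro hq2
              exact hν₂ (hq2 ▸ hqQ)
          _ < n := by
              rw [Finset.card_erase_of_mem hp₂, hcard]
              omega
      exact ih _ hcard' z' rfl (P.smul_mem _ hzP) hz'0
    · -- exactly one element
      have hsub : (sp.basis.repr z).support ⊆ {p₁} := by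
        intro q hq
        rw [Finset.mem_singleton]
        by_contra hne
        have : 1 < (sp.basis.repr z).support.card := Finset.one_lt_card.mpr ⟨q, hq, p₁, hp₁, hne⟩
        omega
      exact ⟨p₁, basis_mem_of_single sp hzP hsub (Finsupp.mem_support_iff.mp hp₁)⟩

include sp in
theorem chen_nontrivial : ∃ m : M, m ≠ 0 :=
  ⟨sp.basis ⟨x, mem_orbit_self x⟩, sp.basis.ne_zero _⟩

include sp in
theorem chen_simple (P : Submodule (LPA G K) M) : P = ⊥ ∨ P = ⊤ := by
  by_cases hP : P = ⊥
  · exact Or.inl hP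
  right
  obtain ⟨z, hzP, hz0⟩ := (Submodule.ne_bot_iff P).mp hP
  obtain ⟨p, hp⟩ := isolate sp P _ z rfl hzP hz0
  have hall : ∀ q : orbit x, sp.basis q ∈ P := by
    intro q
    have h1 : TailEq (q : G.BPath) (p : G.BPath) := (q.2).trans' (p.2).symm'
    obtain ⟨k, μ, ν, d, hμd, hνd, _⟩ := h1
    have hdm : d ∈ orbit x := mem_orbit_cat₁ hμd q.2
    have h2 := smul_op sp (p := p) (q := q) (d := ⟨d, hdm⟩) hνd hμd
    rw [← h2]
    exact P.smul_mem _ hp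
  rw [Submodule.eq_top_iff']
  intro m
  have hrep := sp.basis.linearCombination_repr m
  rw [Finsupp.linearCombination_apply, Finsupp.sum] at hrep
  rw [← hrep]
  apply Submodule.sum_mem
  intro i _
  exact ksmul_mem (hall i) _

end Simplicity

section Part2

variable {K : Type} [Field K] {x : G.BPath} {M : Type} [AddCommGroup M] [Module K M]
  [Module (LPA G K) M] [IsScalarTower K (LPA G K) M]

theorem support_subset_of_mem_span (sp : ChenSpec G K (fun _ => 1) x M)
    {S : Set (orbit x)} {z : M}
    (h : z ∈ Submodule.span K (⇑sp.basis '' S)) :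
    ∀ q ∈ (sp.basis.repr z).support, q ∈ S := by
  intro q hq
  have hsub : Submodule.span K (⇑sp.basis '' S) ≤
      Submodule.comap (sp.basis.repr.toLinearMap) (Finsupp.supported K K S) := by
    rw [Submodule.span_le]
    rintro _ ⟨i, hi, rfl⟩
    simp only [Set.mem_preimage, SetLike.mem_coe, Submodule.mem_comap,
      LinearEquiv.coe_toLinearMap]
    rw [sp.basis.repr_self]
    exact Finsupp.single_mem_supported K 1 hi
  have h2 := hsub h
  simp only [Submodule.mem_comap, LinearEquiv.coe_toLinearMap] at h2
  exact (Finsupp.mem_supported K _).mp h2 hq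

theorem support_Q_of_fixed (sp : ChenSpec G K (fun _ => 1) x M) (a : LPA G K) (z : M)
    (Q : orbit x → Prop)
    (hdiag : ∀ q ∈ (sp.basis.repr z).support,
      a • sp.basis q = if Q q then sp.basis (id q) else 0)
    (hz : a • z = z) : ∀ q ∈ (sp.basis.repr z).support, Q q := by
  intro q hq
  have hs := support_smul_subset sp a z id Q hdiag
  rw [hz] at hs
  obtain ⟨q', hq', hqq⟩ := Finset.mem_image.mp (hs hq)
  simp only [Finset.mem_filter] at hq'
  exact (show q' = q from hqq) ▸ hq'.2

theorem smul_proj_path (sp : ChenSpec G K (fun _ => 1) x M) (μ : G.FinPath) (q : orbit x) :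
    (pathElem G K μ * pathStarElem G K μ) • sp.basis q =
      if (∃ d, IsCat μ d (q : G.BPath)) then sp.basis q else 0 := by
  by_cases h : ∃ d, IsCat μ d (q : G.BPath)
  · rw [if_pos h]
    exact smul_op sp (dropF_spec h) (dropF_spec h)
  · rw [if_neg h]
    exact smul_op_zero sp h

theorem firstEdge_of_inl {q : G.BPath} {ξ : G.FinPath} (h : q.1 = Sum.inl ξ) :
    firstEdge q = ξ.edges.head? := by
  unfold firstEdge
  rw [h]

theorem part2_main {y : G.BPath} {N : Type} [AddCommGroup N] [Module K N]
    [Module (LPA G K) N] [IsScalarTower K (LPA G K) N]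
    (hxfin : ∀ μ : G.FinPath, x.1 = Sum.inl μ → μ.edges = [])
    (n m : ℤ) (spM : ChenSpec G K (fun _ => 1) x M) (spN : ChenSpec G K (fun _ => 1) y N)
    (hiso : GradedIsoLPA G K M N (fun k => chenW spM.basis (k + n))
      (fun k => chenW spN.basis (k + m))) :
    TailEqLag x y (m - n) := by
  classical
  obtain ⟨f, hf, _⟩ := hiso
  set xh : orbit x := ⟨x, mem_orbit_self x⟩ with hxh
  set z : N := f (spM.basis xh) with hzdef
  have hz0 : z ≠ 0 := by
    rw [hzdef]
    intro h0
    exact spM.basis.ne_zero xh (f.map_eq_zero_iff.mp h0)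
  have hmem : spM.basis xh ∈ chenW spM.basis ((-n) + n) := by
    have hn0 : (-n) + n = 0 := by ring
    rw [hn0]
    exact Submodule.subset_span ⟨xh, tailEqLag_refl x, rfl⟩
  have hz : z ∈ chenW spN.basis ((-n) + m) := hf (-n) _ hmem
  have hsupp : ∀ q ∈ (spN.basis.repr z).support, TailEqLag (q : G.BPath) y ((-n) + m) :=
    support_subset_of_mem_span spN hz
  have hfix : ∀ a : LPA G K, a • spM.basis xh = spM.basis xh → a • z = z := by
    intro a ha
    rw [hzdef, ← f.map_smul, ha]
  have hsne : (spN.basis.repr z).support.Nonempty := by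
    rw [Finsupp.support_nonempty_iff]
    intro h0
    exact hz0 (by simpa using spN.basis.repr.map_eq_zero_iff.mp h0)
  -- main claim: every support element is x
  have hqx : ∀ q ∈ (spN.basis.repr z).support, (q : G.BPath) = x := by
    rcases hv : x.1 with ξ | ρ
    · -- x is a vertex path
      have hξnil : ξ.edges = [] := hxfin ξ hv
      have hxfe : firstEdge x = none := by
        rw [firstEdge_of_inl hv, hξnil]
        rfl
      -- step 1: sources
      have hsrc : ∀ q ∈ (spN.basis.repr z).support, x.src = (q : G.BPath).src := by
        apply support_Q_of_fixed spN (ofV G K x.src) z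
          (fun q => x.src = (q : G.BPath).src)
        · intro q _
          exact spN.act_v x.src q
        · apply hfix
          rw [spM.act_v, if_pos rfl]
      -- singularity of x.src
      have hsing : IsSingular G x.src := by
        have h1 := x.2 ξ hv
        have h2 : ξ.rng = ξ.src := FinPath.rng_of_nil hξnil
        have h3 : BPath.src x = ξ.src := by
          obtain ⟨x1, hx2⟩ := x
          have hv' : x1 = Sum.inl ξ := hv
          subst hv'
          rfl
        rw [h2, ← h3] at h1
        exact h1
      have hnone : ∀ q ∈ (spN.basis.repr z).support, firstEdge (q : G.BPath) = none := by
        rcases hsing with hsink | hemit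
        · intro q hq
          by_contra hno
          obtain ⟨e, he⟩ := Option.ne_none_iff_exists'.mp hno
          exact hsink e ((firstEdge_src he).trans (hsrc q hq).symm)
        · -- infinite emitter: projector
          set E₀ : Finset G.E :=
            (spN.basis.repr z).support.biUnion (fun q' => (firstEdge (q' : G.BPath)).toFinset)
            with hE₀
          set a₂ : LPA G K := ofV G K x.src -
            ∑ e ∈ E₀, pathElem G K (singleE G e) * pathStarElem G K (singleE G e) with ha₂
          apply support_Q_of_fixed spN a₂ z (fun q => firstEdge (q : G.BPath) = none)
          · intro q' hq'
            rw [ha₂, sub_smul, Finset.sum_smul]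
            have hvv : ofV G K x.src • spN.basis q' = spN.basis q' := by
              rw [spN.act_v, if_pos (hsrc q' hq')]
            rw [hvv]
            have hterm : ∀ e ∈ E₀,
                (pathElem G K (singleE G e) * pathStarElem G K (singleE G e)) • spN.basis q' =
                  if firstEdge (q' : G.BPath) = some e then spN.basis q' else 0 :=
              fun e _ => smul_proj_e spN
            rw [Finset.sum_congr rfl hterm]
            by_cases hfe : firstEdge (q' : G.BPath) = none
            · rw [if_pos hfe]
              have hz9 : ∀ e ∈ E₀,
                  (if firstEdge (q' : G.BPath) = some e then spN.basis q' else 0) = 0 := by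
                intro e _
                rw [if_neg (by rw [hfe]; simp)]
              rw [Finset.sum_congr rfl hz9, Finset.sum_const_zero, sub_zero]
              rfl
            · obtain ⟨e₀, hfe₀⟩ := Option.ne_none_iff_exists'.mp hfe
              rw [if_neg hfe]
              have he₀ : e₀ ∈ E₀ := by
                rw [hE₀]
                apply Finset.mem_biUnion.mpr ⟨q', hq', ?_⟩
                simp [hfe₀]
              have hsum : ∑ e ∈ E₀,
                  (if firstEdge (q' : G.BPath) = some e then spN.basis q' else 0) =
                  spN.basis q' := by
                rw [Finset.sum_eq_single e₀]
                · rw [if_pos hfe₀]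
                · intro e _ hne
                  rw [if_neg (by rw [hfe₀]; simpa using (Ne.symm hne))]
                · intro h
                  exact absurd he₀ h
              rw [hsum, sub_self]
          · apply hfix
            rw [ha₂, sub_smul, Finset.sum_smul]
            have hvv : ofV G K x.src • spM.basis xh = spM.basis xh := by
              rw [spM.act_v, if_pos rfl]
            rw [hvv]
            have hz9 : ∀ e ∈ E₀,
                (pathElem G K (singleE G e) * pathStarElem G K (singleE G e)) •
                  spM.basis xh = 0 := by
              intro e _
              apply smul_op_zero spM
              rintro ⟨r, hr⟩
              have := isCat_firstEdge hr
              rw [hxfe] at this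
              exact nomatch this
            rw [Finset.sum_congr rfl hz9, Finset.sum_const_zero, sub_zero]
      intro q hq
      exact eq_of_len_zero (hnone q hq) hxfe (hsrc q hq).symm
    · -- x infinite
      have hpre : ∀ q ∈ (spN.basis.repr z).support, ∀ ν : G.FinPath,
          (∃ d, IsCat ν d x) → (∃ d, IsCat ν d (q : G.BPath)) := by
        intro q hq ν hν
        apply support_Q_of_fixed spN (pathElem G K ν * pathStarElem G K ν) z
          (fun q => ∃ d, IsCat ν d (q : G.BPath))
        · intro q' _
          exact smul_proj_path spN ν q'
        · apply hfix
          rw [smul_proj_path spM ν xh, if_pos hν]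
        · exact hq
      intro q hq
      exact (eq_of_prefix_all ⟨ρ, hv⟩ (hpre q hq)).symm
  obtain ⟨q, hq⟩ := hsne
  have h1 := hsupp q hq
  rw [hqx q hq] at h1
  have h2 : (-n) + m = m - n := by ring
  rwa [h2] at h1

end Part2

section Part3

variable {K : Type} [Field K] {x y : G.BPath}
  {M : Type} [AddCommGroup M] [Module K M] [Module (LPA G K) M] [IsScalarTower K (LPA G K) M]
  {N : Type} [AddCommGroup N] [Module K N] [Module (LPA G K) N] [IsScalarTower K (LPA G K) N]

theorem part3_iso {k : ℤ} (hk : TailEqLag y x k) (m : ℤ)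
    (spM : ChenSpec G K (fun _ => 1) y M) (spN : ChenSpec G K (fun _ => 1) x N) :
    GradedIsoLPA G K M N (fun j => chenW spM.basis (j + m))
      (fun j => chenW spN.basis (j + (m + k))) := by
  classical
  have horb : orbit y = orbit x := orbit_eq ⟨k, hk⟩
  let e : ↥(orbit y) ≃ ↥(orbit x) :=
    { toFun := fun p => ⟨p.1, by rw [← horb]; exact p.2⟩
      invFun := fun q => ⟨q.1, by rw [horb]; exact q.2⟩
      left_inv := fun p => rfl
      right_inv := fun q => rfl }
  let f₀ : M ≃ₗ[K] N := spM.basis.equiv spN.basis e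
  have hf₀b : ∀ p : orbit y, f₀ (spM.basis p) = spN.basis (e p) := fun p =>
    spM.basis.equiv_apply p spN.basis e
  have hf₀s : ∀ q : orbit x, f₀.symm (spN.basis q) = spM.basis (e.symm q) := by
    intro q
    rw [show f₀.symm = spN.basis.equiv spM.basis e.symm from spM.basis.equiv_symm spN.basis e]
    exact spN.basis.equiv_apply q spM.basis e.symm
  have hgen_v : ∀ (v : G.V) (p : orbit y),
      f₀ (ofV G K v • spM.basis p) = ofV G K v • f₀ (spM.basis p) := by
    intro v p
    rw [hf₀b, spM.act_v, spN.act_v]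
    by_cases hv : v = BPath.src (p : G.BPath)
    · rw [if_pos hv, if_pos (show v = BPath.src ((e p : orbit x) : G.BPath) from hv), hf₀b]
    · rw [if_neg hv, if_neg (show ¬ v = BPath.src ((e p : orbit x) : G.BPath) from hv),
        map_zero]
  have hgen_e : ∀ (ed : G.E) (p : orbit y),
      f₀ (ofE G K ed • spM.basis p) = ofE G K ed • f₀ (spM.basis p) := by
    intro ed p
    rw [hf₀b]
    by_cases h : ∃ q, IsCat (singleE G ed) (p : G.BPath) q
    · obtain ⟨q, hq⟩ := h
      have hqm : q ∈ orbit y := mem_orbit_cat₂ hq p.2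
      have hqx : q ∈ orbit x := horb ▸ hqm
      rw [act_e' spM (p := p) (q := ⟨q, hqm⟩) hq,
        act_e' spN (p := e p) (q := ⟨q, hqx⟩) hq, hf₀b]
      rfl
    · rw [spM.act_e_zero ed p h, spN.act_e_zero ed (e p) h, map_zero]
  have hgen_g : ∀ (ed : G.E) (p : orbit y),
      f₀ (ofG G K ed • spM.basis p) = ofG G K ed • f₀ (spM.basis p) := by
    intro ed p
    rw [hf₀b]
    by_cases h : ∃ d, IsCat (singleE G ed) d (p : G.BPath)
    · obtain ⟨d, hd⟩ := h
      have hdm : d ∈ orbit y := mem_orbit_cat₁ hd p.2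
      have hdx : d ∈ orbit x := horb ▸ hdm
      rw [act_g' spM (p := ⟨d, hdm⟩) (q := p) hd,
        act_g' spN (p := ⟨d, hdx⟩) (q := e p) hd, hf₀b]
      rfl
    · rw [spM.act_g_zero ed p h, spN.act_g_zero ed (e p) h, map_zero]
  have hbasis_ext : ∀ a : LPA G K,
      (∀ p : orbit y, f₀ (a • spM.basis p) = a • f₀ (spM.basis p)) →
      ∀ mm : M, f₀ (a • mm) = a • f₀ mm := by
    intro a ha
    let L1 : M →ₗ[K] N :=
      { toFun := fun mm => f₀ (a • mm)
        map_add' := fun u v => by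
          show f₀ (a • (u + v)) = f₀ (a • u) + f₀ (a • v)
          rw [smul_add, map_add]
        map_smul' := fun c u => by
          show f₀ (a • (c • u)) = c • f₀ (a • u)
          rw [smul_comm, map_smul] }
    let L2 : M →ₗ[K] N :=
      { toFun := fun mm => a • f₀ mm
        map_add' := fun u v => by
          show a • f₀ (u + v) = a • f₀ u + a • f₀ v
          rw [map_add, smul_add]
        map_smul' := fun c u => by
          show a • f₀ (c • u) = c • (a • f₀ u)
          rw [map_smul, smul_comm] }
    intro mm
    have h12 : L1 = L2 := spM.basis.ext ha
    exact LinearMap.congr_fun h12 mm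
  have hsmul : ∀ (a : LPA G K) (mm : M), f₀ (a • mm) = a • f₀ mm := by
    have hgen : ∀ u : FreeAlgebra K (Gen G), ∀ mm : M,
        f₀ ((RingQuot.mkAlgHom K (LRel G K)) u • mm) =
          (RingQuot.mkAlgHom K (LRel G K)) u • f₀ mm := by
      intro u
      induction u using FreeAlgebra.induction with
      | grade0 r =>
        intro mm
        rw [AlgHom.commutes, algebraMap_smul, algebraMap_smul, map_smul]
      | grade1 g =>
        cases g with
        | vtx v => exact hbasis_ext _ (hgen_v v)
        | edg ed => exact hbasis_ext _ (hgen_e ed)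
        | ghd ed => exact hbasis_ext _ (hgen_g ed)
      | mul u v ihu ihv =>
        intro mm
        rw [map_mul, mul_smul, mul_smul, ihu, ihv]
      | add u v ihu ihv =>
        intro mm
        rw [map_add, add_smul, add_smul, map_add, ihu, ihv]
    intro a mm
    obtain ⟨u, rfl⟩ := RingQuot.mkAlgHom_surjective K (LRel G K) a
    exact hgen u mm
  let F : M ≃ₗ[LPA G K] N :=
    { toFun := f₀
      map_add' := map_add f₀
      map_smul' := fun a mm => by simpa using hsmul a mm
      invFun := f₀.symm
      left_inv := f₀.left_inv
      right_inv := f₀.right_inv }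
  refine ⟨F, ?_, ?_⟩
  · intro j mm hmm
    have hmm' : mm ∈ Submodule.span K
        (⇑spM.basis '' {p : orbit y | TailEqLag (p : G.BPath) y (j + m)}) := hmm
    clear hmm
    induction hmm' using Submodule.span_induction with
    | mem u hu =>
      obtain ⟨p, hp, rfl⟩ := hu
      have h2 : TailEqLag ((e p : orbit x) : G.BPath) x (j + (m + k)) := by
        have h3 := tailEqLag_trans hp hk
        have h4 : j + m + k = j + (m + k) := by ring
        rwa [h4] at h3
      have h5 : F (spM.basis p) = spN.basis (e p) := hf₀b p
      rw [h5]
      exact Submodule.subset_span ⟨e p, h2, rfl⟩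
    | zero =>
      rw [map_zero]
      exact Submodule.zero_mem _
    | add u v hu hv ihu ihv =>
      rw [map_add]
      exact Submodule.add_mem _ ihu ihv
    | smul c u hu ihu =>
      have h6 : F (c • u) = c • F u := f₀.map_smul c u
      rw [h6]
      exact Submodule.smul_mem _ c ihu
  · intro j nn hnn
    have hnn' : nn ∈ Submodule.span K
        (⇑spN.basis '' {q : orbit x | TailEqLag (q : G.BPath) x (j + (m + k))}) := hnn
    clear hnn
    induction hnn' using Submodule.span_induction with
    | mem u hu =>
      obtain ⟨q, hq, rfl⟩ := hu
      have h2 : TailEqLag ((e.symm q : orbit y) : G.BPath) y (j + m) := by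
        have h3 := tailEqLag_trans hq (tailEqLag_symm hk)
        have h4 : j + (m + k) + -k = j + m := by ring
        rwa [h4] at h3
      have h5 : F.symm (spN.basis q) = spM.basis (e.symm q) := hf₀s q
      rw [h5]
      exact Submodule.subset_span ⟨e.symm q, h2, rfl⟩
    | zero =>
      rw [map_zero]
      exact Submodule.zero_mem _
    | add u v hu hv ihu ihv =>
      rw [map_add]
      exact Submodule.add_mem _ ihu ihv
    | smul c u hu ihu =>
      have h6 : F.symm (c • u) = c • F.symm u := f₀.symm.map_smul c u
      rw [h6]
      exact Submodule.smul_mem _ c ihu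

end Part3

end DirGraph

-- ===== AUX END =====

open DirGraph

/-- classification of graded simple modules induced from non-rational
paths: if `D` contains exactly one irrational infinite path from each tail-equivalence
class of irrational paths together with all singular vertices, then the modules
`V_{[x]}(n)` for `x ∈ D`, `n ∈ ℤ` are graded simple, pairwise non-isomorphic as graded
modules, and every `V_{[y]}(m)` with `y` non-rational is graded isomorphic to one of them
(namely to `V_{[x]}(m + k)` where `y ∼_k x`, `x ∈ D`). -/
theorem stmt_6 (G : DirGraph) (K : Type) [Field K] (D : Set G.BPath)
    (hmem : ∀ x ∈ D, ¬ IsRational x ∧ ∀ μ : G.FinPath, x.1 = Sum.inl μ → μ.edges = [])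
    (huniq : ∀ x ∈ D, ∀ y ∈ D, TailEq x y → x = y)
    (hcover : ∀ y : G.BPath, ¬ IsRational y → ∃ x ∈ D, TailEq y x) :
    -- each `V_{[x]}(n)` is graded simple
    (∀ x ∈ D, ∀ _n : ℤ,
      ∀ (M : Type) [AddCommGroup M] [Module K M] [Module (LPA G K) M]
        [IsScalarTower K (LPA G K) M],
      ∀ sp : ChenSpec G K (fun _ => 1) x M,
      (∃ m : M, m ≠ 0) ∧
        ∀ P : Submodule (LPA G K) M,
          GradedCarrier (fun k => chenW sp.basis (k + _n)) ↑P → P = ⊥ ∨ P = ⊤) ∧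
    -- pairwise non-isomorphic
    (∀ x ∈ D, ∀ y ∈ D, ∀ n m : ℤ,
      ∀ (M : Type) [AddCommGroup M] [Module K M] [Module (LPA G K) M]
        [IsScalarTower K (LPA G K) M],
      ∀ (N : Type) [AddCommGroup N] [Module K N] [Module (LPA G K) N]
        [IsScalarTower K (LPA G K) N],
      ∀ (spM : ChenSpec G K (fun _ => 1) x M) (spN : ChenSpec G K (fun _ => 1) y N),
      GradedIsoLPA G K M N (fun k => chenW spM.basis (k + n)) (fun k => chenW spN.basis (k + m)) →
      x = y ∧ n = m) ∧
    -- every shifted Chen module of a non-rational path is graded isomorphic to one of them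
    (∀ y : G.BPath, ¬ IsRational y → ∀ m : ℤ, ∃ x ∈ D, ∃ k : ℤ, TailEqLag y x k ∧
      ∀ (M : Type) [AddCommGroup M] [Module K M] [Module (LPA G K) M]
        [IsScalarTower K (LPA G K) M],
      ∀ (N : Type) [AddCommGroup N] [Module K N] [Module (LPA G K) N]
        [IsScalarTower K (LPA G K) N],
      ∀ (spM : ChenSpec G K (fun _ => 1) y M) (spN : ChenSpec G K (fun _ => 1) x N),
      GradedIsoLPA G K M N (fun j => chenW spM.basis (j + m))
        (fun j => chenW spN.basis (j + (m + k)))) := by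
  refine ⟨?_, ?_, ?_⟩
  · intro x hxD _n M _ _ _ _ sp
    exact ⟨chen_nontrivial sp, fun P _ => chen_simple sp P⟩
  · intro x hxD y hyD n m M _ _ _ _ N _ _ _ _ spM spN hiso
    have h2 : TailEqLag x y (m - n) := part2_main (hmem x hxD).2 n m spM spN hiso
    have hxy : x = y := huniq x hxD y hyD ⟨m - n, h2⟩
    subst hxy
    have h0 : m - n = 0 := lag_self_eq_zero (hmem x hxD).1 h2
    exact ⟨rfl, by omega⟩
  · intro y hy m
    obtain ⟨x, hxD, k, hk⟩ := hcover y hy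
    refine ⟨x, hxD, k, hk, ?_⟩
    intro M _ _ _ _ N _ _ _ _ spM spN
    exact part3_iso hk m spM spN
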